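/- arXiv:2512.06733 — 3 statements merged into one kernel-verified Lean document; each statement's English description precedes it below -/
import Mathlib

section
/- Let n ≥ 2, let τ₁, …, τ_{n−1} be 2×2 real orthogonal matrices, and let Q' be the augmented reflection-based Laplacian on ℝ^{2n} with designated index ℓ, unit normal n̂, and unit mirror direction L̂ (with n̂·L̂ = 0). Then for every initial configuration p(0) ∈ (ℝ²)ⁿ, the solution p(t) = exp(−tQ')p(0) of ṗ = −Q'p converges as t → ∞ to (1/n)·(Σ_{k=1}^{n} ⟨S_k L̂, p_k(0)⟩)·V₀, i.e. to the orthogonal projection of p(0) onto the line spanned by V₀ = (S₁L̂, …, SₙL̂); moreover the convergence is exponential: there exists λ > 0 such that ‖p(t) − (1/n)⟨V₀, p(0)⟩ V₀‖ ≤ e^{−λt}‖p(0)‖ for all t ≥ 0. -/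
open Filter Topology Matrix

noncomputable section

abbrev Cfg (n : ℕ) := EuclideanSpace ℝ (Fin n × Fin 2)

/-- Multiplication of a 2×2 matrix with a planar vector. -/
def mv (M : Matrix (Fin 2) (Fin 2) ℝ) (v : EuclideanSpace ℝ (Fin 2)) :
    EuclideanSpace ℝ (Fin 2) := WithLp.toLp 2 (M.mulVec v)

/-- Multiplication of a 2n×2n matrix with a configuration vector. -/
def mvC {n : ℕ} (M : Matrix (Fin n × Fin 2) (Fin n × Fin 2) ℝ) (v : Cfg n) : Cfg n :=
  WithLp.toLp 2 (M.mulVec v)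

/-- The i-th planar component of a configuration. -/
def blk {n : ℕ} (p : Cfg n) (i : Fin n) : EuclideanSpace ℝ (Fin 2) :=
  WithLp.toLp 2 (fun a => p (i, a))

/-- The action of the matrix-weighted Laplacian Q of the path graph on vertices 0, …, n-1
(with matrix weight τ e on the edge {e, e+1}):
(Qp)ᵢ = (pᵢ − τ_{i-1} p_{i-1}) + (pᵢ − τᵢᵀ p_{i+1}), where the first summand is omitted
for the first vertex and the second for the last. -/
def lapAct (n : ℕ) (τ : Fin (n - 1) → Matrix (Fin 2) (Fin 2) ℝ)
    (p : Fin n → EuclideanSpace ℝ (Fin 2)) (i : Fin n) : EuclideanSpace ℝ (Fin 2) :=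
  (if h : 0 < (i : ℕ) then
      p i - mv (τ ⟨(i : ℕ) - 1, by have := i.isLt; omega⟩)
        (p ⟨(i : ℕ) - 1, by have := i.isLt; omega⟩)
    else 0)
  + (if h : (i : ℕ) + 1 < n then
      p i - mv (τ ⟨(i : ℕ), by omega⟩)ᵀ (p ⟨(i : ℕ) + 1, h⟩)
    else 0)

/-- The action of the augmented reflection-based Laplacian Q', with designated index ℓ and
unit normal n̂: (Q'p)ᵢ = (Qp)ᵢ + [i = ℓ]·2(n̂·p_ℓ)n̂. -/
def lapAugAct (n : ℕ) (τ : Fin (n - 1) → Matrix (Fin 2) (Fin 2) ℝ) (ℓ : Fin n)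
    (nh : EuclideanSpace ℝ (Fin 2)) (p : Fin n → EuclideanSpace ℝ (Fin 2)) (i : Fin n) :
    EuclideanSpace ℝ (Fin 2) :=
  lapAct n τ p i + if i = ℓ then (2 * (inner ℝ nh (p ℓ) : ℝ)) • nh else 0

/-- V₀ = (S₁ L̂, …, Sₙ L̂). -/
def V0 {n : ℕ} (S : Fin n → Matrix (Fin 2) (Fin 2) ℝ) (L : EuclideanSpace ℝ (Fin 2)) : Cfg n :=
  WithLp.toLp 2 (fun x : Fin n × Fin 2 => mv (S x.1) L x.2)

/-- Left endpoint of edge e of the path graph, as a vertex. -/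
def eL {n : ℕ} (e : Fin (n - 1)) : Fin n := ⟨e, by have := e.isLt; omega⟩
/-- Right endpoint of edge e of the path graph, as a vertex. -/
def eR {n : ℕ} (e : Fin (n - 1)) : Fin n := ⟨(e : ℕ) + 1, by have := e.isLt; omega⟩

/- ======== auxiliary lemmas ======== -/

section Aux

lemma inner2 (x y : EuclideanSpace ℝ (Fin 2)) : (inner ℝ x y : ℝ) = x 0 * y 0 + x 1 * y 1 := by
  simp [PiLp.inner_apply, Fin.sum_univ_two, RCLike.inner_apply, mul_comm]

lemma mv_apply (M : Matrix (Fin 2) (Fin 2) ℝ) (v : EuclideanSpace ℝ (Fin 2)) (a : Fin 2) :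
    mv M v a = M a 0 * v 0 + M a 1 * v 1 := by
  fin_cases a <;> simp [mv, Matrix.mulVec, dotProduct, Fin.sum_univ_two]

lemma inner_mv_left (M : Matrix (Fin 2) (Fin 2) ℝ) (x y : EuclideanSpace ℝ (Fin 2)) :
    (inner ℝ (mv M x) y : ℝ) = inner ℝ x (mv Mᵀ y) := by
  simp only [inner2, mv_apply, Matrix.transpose_apply]; ring

lemma mv_mv (A B : Matrix (Fin 2) (Fin 2) ℝ) (v : EuclideanSpace ℝ (Fin 2)) :
    mv A (mv B v) = mv (A*B) v := by
  simp only [mv, WithLp.ofLp_toLp, Matrix.mulVec_mulVec]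

lemma mv_one (v : EuclideanSpace ℝ (Fin 2)) : mv 1 v = v := by simp [mv]

lemma mv_smul (M : Matrix (Fin 2) (Fin 2) ℝ) (c : ℝ) (v : EuclideanSpace ℝ (Fin 2)) :
    mv M (c • v) = c • mv M v := by
  ext a
  simp only [mv_apply, PiLp.smul_apply, smul_eq_mul]
  ring

lemma inner_mv_mv {M : Matrix (Fin 2) (Fin 2) ℝ} (h : Mᵀ*M = 1) (x y : EuclideanSpace ℝ (Fin 2)) :
    (inner ℝ (mv M x) (mv M y) : ℝ) = inner ℝ x y := by
  rw [inner_mv_left, mv_mv, h, mv_one]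

lemma planar {nh Lh : EuclideanSpace ℝ (Fin 2)} (hnh : ‖nh‖ = 1) (hLh : ‖Lh‖ = 1)
    (hperp : (inner ℝ nh Lh : ℝ) = 0) (v : EuclideanSpace ℝ (Fin 2)) :
    v = (inner ℝ nh v : ℝ) • nh + (inner ℝ Lh v : ℝ) • Lh := by
  have h1 : nh 0 ^ 2 + nh 1 ^ 2 = 1 := by
    have : (inner ℝ nh nh : ℝ) = 1 := by rw [real_inner_self_eq_norm_mul_norm, hnh]; ring
    simp only [inner2] at this; nlinarith [this]
  have h2 : Lh 0 ^ 2 + Lh 1 ^ 2 = 1 := by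
    have : (inner ℝ Lh Lh : ℝ) = 1 := by rw [real_inner_self_eq_norm_mul_norm, hLh]; ring
    simp only [inner2] at this; nlinarith [this]
  have h3 : nh 0 * Lh 0 + nh 1 * Lh 1 = 0 := by simpa [inner2] using hperp
  have hsq : (nh 0 * Lh 0)^2 = (nh 1 * Lh 1)^2 := by
    have h3' : nh 0 * Lh 0 = -(nh 1 * Lh 1) := by linarith
    rw [h3']; ring
  have e1 : Lh 0 ^ 2 = nh 1 ^ 2 := by nlinarith [hsq, h1, h2]
  have e2 : Lh 1 ^ 2 = nh 0 ^ 2 := by nlinarith [hsq, h1, h2]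
  have e3 : (nh 0 * nh 1 + Lh 0 * Lh 1)^2 = 0 := by nlinarith [hsq, e1, e2, h3]
  have e4 : nh 0 * nh 1 + Lh 0 * Lh 1 = 0 := sq_eq_zero_iff.mp e3
  ext a
  have ha : a = 0 ∨ a = 1 := by omega
  rcases ha with rfl | rfl <;>
    simp only [PiLp.add_apply, PiLp.smul_apply, smul_eq_mul, inner2]
  · linear_combination (-(v 0)) * h1 - v 0 * e1 - v 1 * e4
  · linear_combination (-(v 1)) * h1 - v 1 * e2 - v 0 * e4

lemma innerCfg {n : ℕ} (x y : Cfg n) :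
    (inner ℝ x y : ℝ) = ∑ i : Fin n, (inner ℝ (blk x i) (blk y i) : ℝ) := by
  simp [PiLp.inner_apply, RCLike.inner_apply, Fintype.sum_prod_type, Fin.sum_univ_two, blk,
    inner2, mul_comm]

lemma edge_id {M : Matrix (Fin 2) (Fin 2) ℝ} (h : Mᵀ*M = 1)
    (u v w z : EuclideanSpace ℝ (Fin 2)) :
    (inner ℝ (u - mv M v) w : ℝ) + (inner ℝ (v - mv Mᵀ u) z : ℝ)
      = inner ℝ (u - mv M v) (w - mv M z) := by
  have h1 : (inner ℝ (mv Mᵀ u) z : ℝ) = inner ℝ u (mv M z) := by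
    rw [inner_mv_left, Matrix.transpose_transpose]
  have h2 : (inner ℝ (mv M v) (mv M z) : ℝ) = inner ℝ v z := inner_mv_mv h v z
  simp only [inner_sub_left, inner_sub_right]
  linarith

lemma Bform {m : ℕ} (τ : Fin (m+1-1) → Matrix (Fin 2) (Fin 2) ℝ)
    (hτ : ∀ e, (τ e)ᵀ * τ e = 1) (ℓ : Fin (m+1)) (nh : EuclideanSpace ℝ (Fin 2))
    (x y : Cfg (m+1)) :
    ∑ i : Fin (m+1), (inner ℝ (lapAugAct (m+1) τ ℓ nh (blk x) i) (blk y i) : ℝ)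
      = (∑ e : Fin m, (inner ℝ (blk x e.succ - mv (τ e) (blk x e.castSucc))
          (blk y e.succ - mv (τ e) (blk y e.castSucc)) : ℝ))
        + 2 * (inner ℝ nh (blk x ℓ) : ℝ) * (inner ℝ nh (blk y ℓ) : ℝ) := by
  have expand : ∀ i : Fin (m+1),
      (inner ℝ (lapAugAct (m+1) τ ℓ nh (blk x) i) (blk y i) : ℝ)
      = (if h : 0 < (i : ℕ) then
          (inner ℝ (blk x i - mv (τ ⟨(i : ℕ) - 1, by have := i.isLt; omega⟩)
            (blk x ⟨(i : ℕ) - 1, by have := i.isLt; omega⟩)) (blk y i) : ℝ) else 0)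
        + (if h : (i : ℕ) + 1 < m+1 then
          (inner ℝ (blk x i - mv (τ ⟨(i : ℕ), by omega⟩)ᵀ (blk x ⟨(i : ℕ) + 1, h⟩)) (blk y i) : ℝ)
          else 0)
        + (if i = ℓ then 2 * (inner ℝ nh (blk x ℓ) : ℝ) * (inner ℝ nh (blk y i) : ℝ) else 0) := by
    intro i
    unfold lapAugAct lapAct
    simp only [inner_add_left]
    congr 1
    · congr 1
      · split <;> first | rfl | simp
      · split <;> first | rfl | simp
    · split <;> simp [real_inner_smul_left, mul_assoc] <;> ring
  simp only [expand, Finset.sum_add_distrib]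
  have s3 : (∑ i : Fin (m+1), if i = ℓ then
      2 * (inner ℝ nh (blk x ℓ) : ℝ) * (inner ℝ nh (blk y i) : ℝ) else 0)
      = 2 * (inner ℝ nh (blk x ℓ) : ℝ) * (inner ℝ nh (blk y ℓ) : ℝ) := by
    rw [Finset.sum_ite_eq' Finset.univ ℓ]; simp
  rw [s3]
  congr 1
  rw [Fin.sum_univ_succ, dif_neg (by simp), zero_add, Fin.sum_univ_castSucc,
    dif_neg (by simp), add_zero, ← Finset.sum_add_distrib]
  apply Finset.sum_congr rfl
  intro j _
  rw [dif_pos (by simp : 0 < ((j.succ : Fin (m+1)) : ℕ)),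
    dif_pos (by simpa using Nat.succ_lt_succ j.isLt : ((j.castSucc : Fin (m+1)) : ℕ) + 1 < m+1)]
  exact edge_id (hτ j) _ _ _ _

section Chain

variable {m : ℕ} (τ : Fin (m+1-1) → Matrix (Fin 2) (Fin 2) ℝ)
  (hτ : ∀ e, (τ e)ᵀ * τ e = 1) (ℓ : Fin (m+1))
  (S : Fin (m+1) → Matrix (Fin 2) (Fin 2) ℝ)
  (hSl : S ℓ = 1)
  (hSup : ∀ e : Fin (m+1-1), (ℓ : ℕ) ≤ (e : ℕ) → S (eR e) = τ e * S (eL e))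
  (hSdown : ∀ e : Fin (m+1-1), (e : ℕ) < (ℓ : ℕ) → S (eL e) = (τ e)ᵀ * S (eR e))

include hτ hSup hSdown in
lemma SR (e : Fin (m+1-1)) : S (eR e) = τ e * S (eL e) := by
  rcases le_or_gt (ℓ : ℕ) (e : ℕ) with h | h
  · exact hSup e h
  · rw [hSdown e h, ← mul_assoc, mul_eq_one_comm.mp (hτ e), one_mul]

include hτ hSup hSdown in
lemma SL (e : Fin (m+1-1)) : S (eL e) = (τ e)ᵀ * S (eR e) := by
  rw [SR τ hτ ℓ S hSup hSdown e, ← mul_assoc, hτ e, one_mul]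

include hτ hSl hSup hSdown in
lemma Sorth (k : Fin (m+1)) : (S k)ᵀ * S k = 1 := by
  have up : ∀ d : ℕ, ∀ h : (ℓ : ℕ) + d < m+1, (S ⟨(ℓ:ℕ)+d, h⟩)ᵀ * S ⟨(ℓ:ℕ)+d, h⟩ = 1 := by
    intro d
    induction d with
    | zero =>
      intro h
      have : (⟨(ℓ:ℕ)+0, h⟩ : Fin (m+1)) = ℓ := by ext; simp
      rw [this, hSl]; simp
    | succ d ih =>
      intro h
      have hd : (ℓ:ℕ) + d < m+1 := by omega
      have he : (ℓ:ℕ) + d < m+1-1 := by omega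
      have h1 : (⟨(ℓ:ℕ)+(d+1), h⟩ : Fin (m+1)) = eR ⟨(ℓ:ℕ)+d, he⟩ := by
        simp only [eR]; ext; simp; omega
      have h2 : eL (⟨(ℓ:ℕ)+d, he⟩ : Fin (m+1-1)) = ⟨(ℓ:ℕ)+d, hd⟩ := by
        simp only [eL]
      rw [h1, SR τ hτ ℓ S hSup hSdown, h2, Matrix.transpose_mul, mul_assoc,
        ← mul_assoc (τ _)ᵀ, hτ, one_mul, ih hd]
  have down : ∀ d : ℕ, d ≤ (ℓ : ℕ) → (S ⟨(ℓ:ℕ)-d, by omega⟩)ᵀ * S ⟨(ℓ:ℕ)-d, by omega⟩ = 1 := by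
    intro d
    induction d with
    | zero =>
      intro h
      have : (⟨(ℓ:ℕ)-0, by omega⟩ : Fin (m+1)) = ℓ := by ext; simp
      rw [this, hSl]; simp
    | succ d ih =>
      intro h
      have he : (ℓ:ℕ) - (d+1) < m+1-1 := by omega
      have h1 : (⟨(ℓ:ℕ)-(d+1), by omega⟩ : Fin (m+1)) = eL ⟨(ℓ:ℕ)-(d+1), he⟩ := by
        simp only [eL]
      have h2 : eR (⟨(ℓ:ℕ)-(d+1), he⟩ : Fin (m+1-1)) = ⟨(ℓ:ℕ)-d, by omega⟩ := by
        simp only [eR]; ext; simp; omega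
      rw [h1, SL τ hτ ℓ S hSup hSdown, h2, Matrix.transpose_mul, mul_assoc,
        ← mul_assoc (τ _)ᵀᵀ, Matrix.transpose_transpose,
        mul_eq_one_comm.mp (hτ _), one_mul, ih (by omega)]
  rcases le_or_gt (ℓ : ℕ) (k : ℕ) with h | h
  · have : k = ⟨(ℓ:ℕ) + ((k:ℕ) - (ℓ:ℕ)), by omega⟩ := by ext; simp; omega
    rw [this]; exact up _ _
  · have : k = ⟨(ℓ:ℕ) - ((ℓ:ℕ) - (k:ℕ)), by omega⟩ := by ext; simp; omega
    rw [this]; exact down _ (by omega)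

include hτ hSl hSup hSdown in
lemma blocksEq (p : Cfg (m+1)) (c : ℝ) (Lh' : EuclideanSpace ℝ (Fin 2))
    (hc : ∀ e : Fin (m+1-1), blk p (eR e) = mv (τ e) (blk p (eL e)))
    (hbase : blk p ℓ = c • Lh') :
    ∀ k, blk p k = c • mv (S k) Lh' := by
  have up : ∀ d : ℕ, ∀ h : (ℓ : ℕ) + d < m+1,
      blk p ⟨(ℓ:ℕ)+d, h⟩ = c • mv (S ⟨(ℓ:ℕ)+d, h⟩) Lh' := by
    intro d
    induction d with
    | zero =>
      intro h
      have hi : (⟨(ℓ:ℕ)+0, h⟩ : Fin (m+1)) = ℓ := by ext; simp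
      rw [hi, hSl, mv_one]; exact hbase
    | succ d ih =>
      intro h
      have hd : (ℓ:ℕ) + d < m+1 := by omega
      have he : (ℓ:ℕ) + d < m+1-1 := by omega
      have h1 : (⟨(ℓ:ℕ)+(d+1), h⟩ : Fin (m+1)) = eR ⟨(ℓ:ℕ)+d, he⟩ := by
        simp only [eR]; ext; simp; omega
      have h2 : eL (⟨(ℓ:ℕ)+d, he⟩ : Fin (m+1-1)) = ⟨(ℓ:ℕ)+d, hd⟩ := by
        simp only [eL]
      rw [h1, hc, h2, ih hd, mv_smul, mv_mv, ← h2, ← SR τ hτ ℓ S hSup hSdown]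
  have down : ∀ d : ℕ, d ≤ (ℓ : ℕ) →
      blk p ⟨(ℓ:ℕ)-d, by omega⟩ = c • mv (S ⟨(ℓ:ℕ)-d, by omega⟩) Lh' := by
    intro d
    induction d with
    | zero =>
      intro h
      have hi : (⟨(ℓ:ℕ)-0, by omega⟩ : Fin (m+1)) = ℓ := by ext; simp
      rw [hi, hSl, mv_one]; exact hbase
    | succ d ih =>
      intro h
      have he : (ℓ:ℕ) - (d+1) < m+1-1 := by omega
      have h1 : (⟨(ℓ:ℕ)-(d+1), by omega⟩ : Fin (m+1)) = eL ⟨(ℓ:ℕ)-(d+1), he⟩ := by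
        simp only [eL]
      have h2 : eR (⟨(ℓ:ℕ)-(d+1), he⟩ : Fin (m+1-1)) = ⟨(ℓ:ℕ)-d, by omega⟩ := by
        simp only [eR]; ext; simp; omega
      have hinv : blk p (eL ⟨(ℓ:ℕ)-(d+1), he⟩)
          = mv (τ ⟨(ℓ:ℕ)-(d+1), he⟩)ᵀ (blk p (eR ⟨(ℓ:ℕ)-(d+1), he⟩)) := by
        rw [hc, mv_mv, hτ, mv_one]
      rw [h1, hinv, h2, ih (by omega), mv_smul, mv_mv, ← h2,
        ← SL τ hτ ℓ S hSup hSdown]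
  intro k
  rcases le_or_gt (ℓ : ℕ) (k : ℕ) with h | h
  · have hk : k = ⟨(ℓ:ℕ) + ((k:ℕ) - (ℓ:ℕ)), by omega⟩ := by ext; simp; omega
    rw [hk]; exact up _ _
  · have hk : k = ⟨(ℓ:ℕ) - ((ℓ:ℕ) - (k:ℕ)), by omega⟩ := by ext; simp; omega
    rw [hk]; exact down _ (by omega)

end Chain

section Kernel

variable {m : ℕ} (τ : Fin (m+1-1) → Matrix (Fin 2) (Fin 2) ℝ)
  (hτ : ∀ e, (τ e)ᵀ * τ e = 1) (ℓ : Fin (m+1))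
  (nh Lh : EuclideanSpace ℝ (Fin 2))
  (S : Fin (m+1) → Matrix (Fin 2) (Fin 2) ℝ)
  (hSl : S ℓ = 1)
  (hSup : ∀ e : Fin (m+1-1), (ℓ : ℕ) ≤ (e : ℕ) → S (eR e) = τ e * S (eL e))
  (hSdown : ∀ e : Fin (m+1-1), (e : ℕ) < (ℓ : ℕ) → S (eL e) = (τ e)ᵀ * S (eR e))

lemma blkV0 (k : Fin (m+1)) : blk (V0 S Lh) k = mv (S k) Lh := rfl

include hτ hSl hSup hSdown in
lemma lapV0 (hperp : (inner ℝ nh Lh : ℝ) = 0) (i : Fin (m+1)) :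
    lapAugAct (m+1) τ ℓ nh (blk (V0 S Lh)) i = 0 := by
  unfold lapAugAct lapAct
  have t1 : (if h : 0 < (i : ℕ) then
      blk (V0 S Lh) i - mv (τ ⟨(i : ℕ) - 1, by have := i.isLt; omega⟩)
        (blk (V0 S Lh) ⟨(i : ℕ) - 1, by have := i.isLt; omega⟩)
    else 0) = 0 := by
    split
    · next h =>
      have he : (i:ℕ) - 1 < m+1-1 := by have := i.isLt; omega
      have hR : eR (⟨(i:ℕ)-1, he⟩ : Fin (m+1-1)) = i := by
        simp only [eR]; ext; simp; omega
      have hS := SR τ hτ ℓ S hSup hSdown ⟨(i:ℕ)-1, he⟩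
      rw [hR, show eL (⟨(i:ℕ)-1, he⟩ : Fin (m+1-1))
          = (⟨(i : ℕ) - 1, by have := i.isLt; omega⟩ : Fin (m+1)) from rfl] at hS
      rw [blkV0, blkV0, mv_mv, ← hS, sub_self]
    · rfl
  have t2 : (if h : (i : ℕ) + 1 < m+1 then
      blk (V0 S Lh) i - mv (τ ⟨(i : ℕ), by omega⟩)ᵀ (blk (V0 S Lh) ⟨(i : ℕ) + 1, h⟩)
    else 0) = 0 := by
    split
    · next h =>
      have he : (i:ℕ) < m+1-1 := by omega
      have hS := SL τ hτ ℓ S hSup hSdown ⟨(i:ℕ), he⟩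
      rw [show eL (⟨(i:ℕ), he⟩ : Fin (m+1-1)) = i from by
          simp only [eL], show eR (⟨(i:ℕ), he⟩ : Fin (m+1-1)) = ⟨(i:ℕ)+1, h⟩ from rfl] at hS
      rw [blkV0, blkV0, mv_mv, ← hS, sub_self]
    · rfl
  rw [t1, t2]
  have t3 : (inner ℝ nh (blk (V0 S Lh) ℓ) : ℝ) = 0 := by
    rw [blkV0, hSl, mv_one]; exact hperp
  rw [t3]
  simp

include hτ hSl hSup hSdown in
lemma V0ker (Qm : Matrix (Fin (m+1) × Fin 2) (Fin (m+1) × Fin 2) ℝ)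
    (hQm : ∀ (p : Cfg (m+1)) (i : Fin (m+1)) (a : Fin 2),
      mvC Qm p (i, a) = lapAugAct (m+1) τ ℓ nh (blk p) i a)
    (hperp : (inner ℝ nh Lh : ℝ) = 0) :
    mvC Qm (V0 S Lh) = 0 := by
  ext x
  have : mvC Qm (V0 S Lh) (x.1, x.2) = lapAugAct (m+1) τ ℓ nh (blk (V0 S Lh)) x.1 x.2 :=
    hQm _ _ _
  rw [lapV0 τ hτ ℓ nh Lh S hSl hSup hSdown hperp] at this
  simpa using this

include hτ hSl hSup hSdown in
lemma kerFwd (hnh : ‖nh‖ = 1) (hLh : ‖Lh‖ = 1) (hperp : (inner ℝ nh Lh : ℝ) = 0)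
    (Qm : Matrix (Fin (m+1) × Fin 2) (Fin (m+1) × Fin 2) ℝ)
    (hQm : ∀ (p : Cfg (m+1)) (i : Fin (m+1)) (a : Fin 2),
      mvC Qm p (i, a) = lapAugAct (m+1) τ ℓ nh (blk p) i a)
    (p : Cfg (m+1)) (hp : mvC Qm p = 0) :
    ∃ c : ℝ, p = c • V0 S Lh := by
  have hb : ∀ i, blk (mvC Qm p) i = lapAugAct (m+1) τ ℓ nh (blk p) i := by
    intro i; ext a; exact hQm p i a
  have h0 : (inner ℝ (mvC Qm p) p : ℝ) = 0 := by rw [hp]; simp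
  rw [innerCfg] at h0
  simp only [hb] at h0
  rw [Bform τ hτ ℓ nh p p] at h0
  set a : ℝ := (inner ℝ nh (blk p ℓ) : ℝ) with ha
  have hsumnn : (0:ℝ) ≤ ∑ e : Fin m, (inner ℝ (blk p e.succ - mv (τ e) (blk p e.castSucc))
      (blk p e.succ - mv (τ e) (blk p e.castSucc)) : ℝ) :=
    Finset.sum_nonneg fun e _ => real_inner_self_nonneg
  have hann : 0 ≤ a * a := mul_self_nonneg a
  have ha0 : a = 0 := by
    have : a * a = 0 := by linarith
    exact mul_self_eq_zero.mp this
  have hsum0 : (∑ e : Fin m, (inner ℝ (blk p e.succ - mv (τ e) (blk p e.castSucc))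
      (blk p e.succ - mv (τ e) (blk p e.castSucc)) : ℝ)) = 0 := by linarith
  have hedge : ∀ e : Fin m, blk p e.succ = mv (τ e) (blk p e.castSucc) := by
    intro e
    have := (Finset.sum_eq_zero_iff_of_nonneg
      (fun e _ => real_inner_self_nonneg)).mp hsum0 e (Finset.mem_univ e)
    have hz := inner_self_eq_zero.mp this
    exact sub_eq_zero.mp hz
  set c : ℝ := (inner ℝ Lh (blk p ℓ) : ℝ) with hc
  have hbase : blk p ℓ = c • Lh := by
    have hpl := planar hnh hLh hperp (blk p ℓ)
    rw [← ha, ← hc, ha0, zero_smul, zero_add] at hpl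
    exact hpl
  have hblocks := blocksEq τ hτ ℓ S hSl hSup hSdown p c Lh
    (fun e => hedge e) hbase
  refine ⟨c, ?_⟩
  ext x
  have h1 : p (x.1, x.2) = blk p x.1 x.2 := rfl
  have h2 := congrArg (fun v => v x.2) (hblocks x.1)
  have : p (x.1, x.2) = c * mv (S x.1) Lh x.2 := by rw [h1, h2]; rfl
  simpa [V0] using this

include hτ hSl hSup hSdown in
lemma normV0 (hLh : ‖Lh‖ = 1) : (inner ℝ (V0 S Lh) (V0 S Lh) : ℝ) = (m+1 : ℝ) := by
  rw [innerCfg]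
  have : ∀ k : Fin (m+1), (inner ℝ (blk (V0 S Lh) k) (blk (V0 S Lh) k) : ℝ) = 1 := by
    intro k
    rw [blkV0, inner_mv_mv (Sorth τ hτ ℓ S hSl hSup hSdown k), real_inner_self_eq_norm_mul_norm,
      hLh, one_mul]
  simp only [this]; simp

end Kernel

section Spectral

lemma exp_clm_eigen {E : Type*} [NormedAddCommGroup E] [NormedSpace ℝ E] [CompleteSpace E]
    (A : E →L[ℝ] E) (v : E) (mu : ℝ) (h : A v = mu • v) :
    NormedSpace.exp A v = Real.exp mu • v := by
  have hpow : ∀ k : ℕ, (A ^ k) v = mu ^ k • v := by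
    intro k; induction k with
    | zero => simp
    | succ k ih =>
      rw [pow_succ, ContinuousLinearMap.mul_apply, h, _root_.map_smul, ih, smul_smul, ← pow_succ']
  have hsum : Summable fun k : ℕ => ((Nat.factorial k : ℝ))⁻¹ • A ^ k := NormedSpace.expSeries_summable' A
  rw [NormedSpace.exp_eq_tsum ℝ]
  have happ : (∑' k : ℕ, ((Nat.factorial k : ℝ))⁻¹ • A ^ k) v = ∑' k : ℕ, (((Nat.factorial k : ℝ))⁻¹ • A ^ k) v :=
    (ContinuousLinearMap.apply ℝ E v).map_tsum hsum
  rw [happ]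
  have hterm : ∀ k : ℕ, (((Nat.factorial k : ℝ))⁻¹ • A ^ k) v = (mu ^ k / (Nat.factorial k : ℝ)) • v := by
    intro k
    rw [ContinuousLinearMap.smul_apply, hpow, smul_smul, div_eq_mul_inv, mul_comm]
  rw [tsum_congr hterm, Summable.tsum_smul_const (Real.summable_pow_div_factorial mu)]
  congr 1
  rw [Real.exp_eq_exp_ℝ, NormedSpace.exp_eq_tsum_div]

lemma parseval {ι E : Type*} [Fintype ι] [NormedAddCommGroup E] [InnerProductSpace ℝ E]
    (b : OrthonormalBasis ι ℝ E) (x : E) :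
    ‖x‖^2 = ∑ i, (inner ℝ (b i) x : ℝ)^2 := by
  have h1 : ‖x‖ = ‖b.repr x‖ := (b.repr.norm_map x).symm
  rw [h1, EuclideanSpace.norm_eq, Real.sq_sqrt (Finset.sum_nonneg fun i _ => sq_nonneg _)]
  refine Finset.sum_congr rfl fun i _ => ?_
  rw [b.repr_apply_apply, Real.norm_eq_abs, sq_abs]

end Spectral

end Aux

set_option maxHeartbeats 1600000 in
/-- For the augmented reflection-based Laplacian Q' (path-graph spanning
tree of Cₙ, orthogonal weights τᵢ, designated agent ℓ anchored to the mirror line with unit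
normal n̂ and unit direction L̂, n̂·L̂ = 0), every solution p(t) = exp(−tQ')p(0) of ṗ = −Q'p
converges as t → ∞ to (1/n)·(Σₖ ⟨SₖL̂, pₖ(0)⟩)·V₀, the orthogonal projection of p(0) onto
the line spanned by V₀ = (S₁L̂, …, SₙL̂); moreover the convergence is exponential. -/
theorem stmt0 (n : ℕ) (hn : 2 ≤ n)
    (τ : Fin (n - 1) → Matrix (Fin 2) (Fin 2) ℝ)
    (hτ : ∀ e, (τ e)ᵀ * τ e = 1)
    (ℓ : Fin n) (nh Lh : EuclideanSpace ℝ (Fin 2))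
    (hnh : ‖nh‖ = 1) (hLh : ‖Lh‖ = 1) (hperp : (inner ℝ nh Lh : ℝ) = 0)
    (S : Fin n → Matrix (Fin 2) (Fin 2) ℝ)
    (hSl : S ℓ = 1)
    (hSup : ∀ e : Fin (n - 1), (ℓ : ℕ) ≤ (e : ℕ) → S (eR e) = τ e * S (eL e))
    (hSdown : ∀ e : Fin (n - 1), (e : ℕ) < (ℓ : ℕ) → S (eL e) = (τ e)ᵀ * S (eR e))
    (Qm : Matrix (Fin n × Fin 2) (Fin n × Fin 2) ℝ)
    (hQm : ∀ (p : Cfg n) (i : Fin n) (a : Fin 2),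
      mvC Qm p (i, a) = lapAugAct n τ ℓ nh (blk p) i a)
    (p0 : Cfg n) :
    Tendsto (fun t : ℝ => mvC (NormedSpace.exp ((-t) • Qm)) p0) atTop
        (𝓝 (((n : ℝ)⁻¹ * ∑ k : Fin n, (inner ℝ (mv (S k) Lh) (blk p0 k) : ℝ)) • V0 S Lh)) ∧
      ∃ lam : ℝ, 0 < lam ∧ ∀ t : ℝ, 0 ≤ t →
        ‖mvC (NormedSpace.exp ((-t) • Qm)) p0
            - ((n : ℝ)⁻¹ * (inner ℝ (V0 S Lh) p0 : ℝ)) • V0 S Lh‖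
          ≤ Real.exp (-lam * t) * ‖p0‖ := by
  obtain ⟨m, rfl⟩ : ∃ m, n = m + 1 := ⟨n - 1, by omega⟩
  clear hn
  classical
  have hdim : Module.finrank ℝ (EuclideanSpace ℝ (Fin (m+1) × Fin 2))
      = Fintype.card (Fin (m+1) × Fin 2) := finrank_euclideanSpace
  set T : EuclideanSpace ℝ (Fin (m+1) × Fin 2) →ₗ[ℝ] EuclideanSpace ℝ (Fin (m+1) × Fin 2) :=
    Matrix.toEuclideanLin Qm with hTdef
  have hTapp : ∀ p : Cfg (m+1), T p = mvC Qm p := fun p => rfl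
  have hbb : ∀ (x : Cfg (m+1)) (i : Fin (m+1)),
      blk (mvC Qm x) i = lapAugAct (m+1) τ ℓ nh (blk x) i := by
    intro x i; ext a; exact hQm x i a
  have hform : ∀ x y : Cfg (m+1), (inner ℝ (T x) y : ℝ)
      = (∑ e : Fin m, (inner ℝ (blk x e.succ - mv (τ e) (blk x e.castSucc))
          (blk y e.succ - mv (τ e) (blk y e.castSucc)) : ℝ))
        + 2 * (inner ℝ nh (blk x ℓ) : ℝ) * (inner ℝ nh (blk y ℓ) : ℝ) := by
    intro x y
    rw [hTapp, innerCfg]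
    simp only [hbb]
    exact Bform τ hτ ℓ nh x y
  have hsym : T.IsSymmetric := by
    intro x y
    have hc : ∀ e : Fin m,
        (inner ℝ (blk y e.succ - mv (τ e) (blk y e.castSucc))
          (blk x e.succ - mv (τ e) (blk x e.castSucc)) : ℝ)
        = (inner ℝ (blk x e.succ - mv (τ e) (blk x e.castSucc))
          (blk y e.succ - mv (τ e) (blk y e.castSucc)) : ℝ) := fun e => real_inner_comm _ _
    have e2 : (inner ℝ x (T y) : ℝ)
        = (∑ e : Fin m, (inner ℝ (blk x e.succ - mv (τ e) (blk x e.castSucc))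
            (blk y e.succ - mv (τ e) (blk y e.castSucc)) : ℝ))
          + 2 * (inner ℝ nh (blk x ℓ) : ℝ) * (inner ℝ nh (blk y ℓ) : ℝ) := by
      calc (inner ℝ x (T y) : ℝ) = inner ℝ (T y) x := real_inner_comm _ _
        _ = (∑ e : Fin m, (inner ℝ (blk y e.succ - mv (τ e) (blk y e.castSucc))
              (blk x e.succ - mv (τ e) (blk x e.castSucc)) : ℝ))
            + 2 * (inner ℝ nh (blk y ℓ) : ℝ) * (inner ℝ nh (blk x ℓ) : ℝ) := hform y x
        _ = (∑ e : Fin m, (inner ℝ (blk x e.succ - mv (τ e) (blk x e.castSucc))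
              (blk y e.succ - mv (τ e) (blk y e.castSucc)) : ℝ))
            + 2 * (inner ℝ nh (blk x ℓ) : ℝ) * (inner ℝ nh (blk y ℓ) : ℝ) := by
            rw [Finset.sum_congr rfl fun e _ => hc e]; ring
    exact (hform x y).trans e2.symm
  set b := hsym.eigenvectorBasis hdim with hbdef
  set μ := hsym.eigenvalues hdim with hμdef
  have hbe : ∀ i, T (b i) = μ i • b i := fun i => by
    exact hsym.apply_eigenvectorBasis hdim i
  have hbnorm : ∀ i, (inner ℝ (b i) (b i) : ℝ) = 1 := fun i => by
    rw [real_inner_self_eq_norm_mul_norm, b.orthonormal.1 i, one_mul]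
  have hQF : ∀ x : Cfg (m+1), 0 ≤ (inner ℝ (T x) x : ℝ) := by
    intro x
    rw [hform x x]
    have h2 : 0 ≤ ∑ e : Fin m, (inner ℝ (blk x e.succ - mv (τ e) (blk x e.castSucc))
        (blk x e.succ - mv (τ e) (blk x e.castSucc)) : ℝ) :=
      Finset.sum_nonneg fun e _ => real_inner_self_nonneg
    nlinarith [mul_self_nonneg (inner ℝ nh (blk x ℓ) : ℝ)]
  have hμnn : ∀ i, 0 ≤ μ i := by
    intro i
    have h1 : (inner ℝ (T (b i)) (b i) : ℝ) = μ i := by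
      rw [hbe i, real_inner_smul_left, hbnorm i, mul_one]
    rw [← h1]; exact hQF (b i)
  have hTV0 : T (V0 S Lh) = 0 := by
    rw [hTapp]; exact V0ker τ hτ ℓ nh Lh S hSl hSup hSdown Qm hQm hperp
  have hker : ∀ x : Cfg (m+1), T x = 0 → ∃ c : ℝ, x = c • V0 S Lh := by
    intro x hx
    exact kerFwd τ hτ ℓ nh Lh S hSl hSup hSdown hnh hLh hperp Qm hQm x
      (by rw [← hTapp]; exact hx)
  have hnV0 : (inner ℝ (V0 S Lh) (V0 S Lh) : ℝ) = ((m+1 : ℕ) : ℝ) := by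
    rw [normV0 τ hτ ℓ Lh S hSl hSup hSdown hLh]; push_cast; ring
  set A : EuclideanSpace ℝ (Fin (m+1) × Fin 2) →L[ℝ] EuclideanSpace ℝ (Fin (m+1) × Fin 2) :=
    Matrix.toEuclideanCLM (𝕜 := ℝ) Qm with hAdef
  have hAT : ∀ x : Cfg (m+1), A x = T x := fun x => rfl
  have hmvCexp : ∀ t : ℝ, mvC (NormedSpace.exp ((-t) • Qm)) p0
      = NormedSpace.exp ((-t) • A) p0 := by
    intro t
    letI : SeminormedRing (Matrix (Fin (m+1) × Fin 2) (Fin (m+1) × Fin 2) ℝ) :=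
      Matrix.linftyOpSemiNormedRing
    letI : NormedRing (Matrix (Fin (m+1) × Fin 2) (Fin (m+1) × Fin 2) ℝ) :=
      Matrix.linftyOpNormedRing
    letI : NormedAlgebra ℝ (Matrix (Fin (m+1) × Fin 2) (Fin (m+1) × Fin 2) ℝ) :=
      Matrix.linftyOpNormedAlgebra
    letI : NormedAlgebra ℚ (Matrix (Fin (m+1) × Fin 2) (Fin (m+1) × Fin 2) ℝ) :=
      Matrix.linftyOpNormedAlgebra
    have hsmul : ∀ (r : ℝ) (M : Matrix (Fin (m+1) × Fin 2) (Fin (m+1) × Fin 2) ℝ),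
        Matrix.toEuclideanCLM (𝕜 := ℝ) (r • M) = r • Matrix.toEuclideanCLM (𝕜 := ℝ) M := by
      intro r M
      refine ContinuousLinearMap.ext fun x => ?_
      show Matrix.toEuclideanLin (r • M) x = (r • Matrix.toEuclideanCLM (𝕜 := ℝ) M) x
      rw [_root_.map_smul]
      rfl
    have hcont : Continuous
        (fun M : Matrix (Fin (m+1) × Fin 2) (Fin (m+1) × Fin 2) ℝ =>
          Matrix.toEuclideanCLM (𝕜 := ℝ) M) := by
      exact LinearMap.continuous_of_finiteDimensional
        ({ toFun := fun M => Matrix.toEuclideanCLM (𝕜 := ℝ) M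
           map_add' := fun a c => by
             refine ContinuousLinearMap.ext fun x => ?_
             show Matrix.toEuclideanLin (a + c) x
               = (Matrix.toEuclideanCLM (𝕜 := ℝ) a + Matrix.toEuclideanCLM (𝕜 := ℝ) c) x
             rw [map_add]
             rfl
           map_smul' := fun r a => by simpa using hsmul r a } :
          Matrix (Fin (m+1) × Fin 2) (Fin (m+1) × Fin 2) ℝ →ₗ[ℝ]
            (EuclideanSpace ℝ (Fin (m+1) × Fin 2) →L[ℝ] EuclideanSpace ℝ (Fin (m+1) × Fin 2)))
    have h1 := NormedSpace.map_exp
      (Matrix.toEuclideanCLM (𝕜 := ℝ) (n := Fin (m+1) × Fin 2)) hcont ((-t) • Qm)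
    have h2 : Matrix.toEuclideanCLM (𝕜 := ℝ) ((-t) • Qm) = (-t) • A := hsmul (-t) Qm
    calc mvC (NormedSpace.exp ((-t) • Qm)) p0
        = Matrix.toEuclideanCLM (𝕜 := ℝ) (NormedSpace.exp ((-t) • Qm)) p0 := rfl
      _ = NormedSpace.exp ((-t) • A) p0 := by rw [← h2]; exact congrArg (fun f => f p0) h1
  have heig : ∀ (t : ℝ) i, NormedSpace.exp ((-t) • A) (b i) = Real.exp (-t * μ i) • b i := by
    intro t i
    refine exp_clm_eigen _ _ _ ?_
    rw [ContinuousLinearMap.smul_apply, hAT, hbe i, smul_smul]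
  set c : Fin (Fintype.card (Fin (m+1) × Fin 2)) → ℝ := fun i => (inner ℝ (b i) p0 : ℝ) with hcdef
  have hrepr : ∑ i, c i • b i = p0 := b.sum_repr' p0
  have hV0coord : ∀ i, μ i ≠ 0 → (inner ℝ (b i) (V0 S Lh) : ℝ) = 0 := by
    intro i hi
    have h0 : (inner ℝ (T (b i)) (V0 S Lh) : ℝ) = 0 := by
      rw [hsym (b i) (V0 S Lh), hTV0, inner_zero_right]
    rw [hbe i, real_inner_smul_left] at h0
    exact (mul_eq_zero.mp h0).resolve_left hi
  set P0 : Cfg (m+1) := ((((m+1 : ℕ) : ℝ))⁻¹ * (inner ℝ (V0 S Lh) p0 : ℝ)) • V0 S Lh with hP0def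
  have hP0coord : ∀ i, (inner ℝ (b i) P0 : ℝ) = if μ i = 0 then c i else 0 := by
    intro i
    by_cases hi : μ i = 0
    · obtain ⟨d, hd⟩ := hker (b i) (by rw [hbe i, hi, zero_smul])
      have hVp : (inner ℝ (V0 S Lh) (p0 - P0) : ℝ) = 0 := by
        rw [inner_sub_right, hP0def, real_inner_smul_right, hnV0]
        have hne : ((m+1:ℕ):ℝ) ≠ 0 := by positivity
        field_simp; ring
      have hbp : (inner ℝ (b i) (p0 - P0) : ℝ) = 0 := by
        rw [hd, real_inner_smul_left, hVp, mul_zero]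
      rw [inner_sub_right] at hbp
      rw [if_pos hi, hcdef]
      linarith [hbp]
    · rw [if_neg hi, hP0def, real_inner_smul_right, hV0coord i hi, mul_zero]
  have hgp : ∀ t : ℝ, NormedSpace.exp ((-t) • A) p0
      = ∑ i, (Real.exp (-t * μ i) * c i) • b i := by
    intro t
    conv_lhs => rw [← hrepr]
    rw [map_sum]
    refine Finset.sum_congr rfl fun i _ => ?_
    rw [_root_.map_smul, heig, smul_smul, mul_comm]
  have hP0sum : P0 = ∑ i, (if μ i = 0 then c i else 0) • b i := by
    conv_lhs => rw [← b.sum_repr' P0]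
    exact Finset.sum_congr rfl fun i _ => by rw [hP0coord i]
  have hdiff : ∀ t : ℝ, NormedSpace.exp ((-t) • A) p0 - P0
      = ∑ i, ((Real.exp (-t * μ i) * c i) - (if μ i = 0 then c i else 0)) • b i := by
    intro t
    rw [hgp, hP0sum, ← Finset.sum_sub_distrib]
    exact Finset.sum_congr rfl fun i _ => (sub_smul _ _ _).symm
  set P : Finset (Fin (Fintype.card (Fin (m+1) × Fin 2))) :=
    Finset.univ.filter (fun i => μ i ≠ 0) with hPdef
  set lam : ℝ := if h : P.Nonempty then (P.image μ).min' (h.image μ) else 1 with hlamdef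
  have hlampos : 0 < lam := by
    rw [hlamdef]; split
    · next h =>
      obtain ⟨i, hiP, hival⟩ := Finset.mem_image.mp ((P.image μ).min'_mem (h.image μ))
      have hne : μ i ≠ 0 := (Finset.mem_filter.mp hiP).2
      rw [← hival]
      exact lt_of_le_of_ne (hμnn i) (Ne.symm hne)
    · exact one_pos
  have hlamle : ∀ i, μ i ≠ 0 → lam ≤ μ i := by
    intro i hi
    have hiP : i ∈ P := Finset.mem_filter.mpr ⟨Finset.mem_univ i, hi⟩
    rw [hlamdef]
    split
    · exact Finset.min'_le _ _ (Finset.mem_image_of_mem μ hiP)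
    · next h => exact absurd ⟨i, hiP⟩ h
  have hcoefbound : ∀ t : ℝ, 0 ≤ t → ∀ i,
      ((Real.exp (-t * μ i) * c i) - (if μ i = 0 then c i else 0))^2
        ≤ (Real.exp (-lam * t))^2 * (c i)^2 := by
    intro t ht i
    by_cases hi : μ i = 0
    · rw [if_pos hi, hi]
      simp only [mul_zero, neg_zero, Real.exp_zero, one_mul, sub_self]
      have hz : ((0:ℝ))^2 = 0 := by norm_num
      rw [hz]
      positivity
    · rw [if_neg hi, sub_zero, mul_pow]
      have h1 : Real.exp (-t * μ i) ≤ Real.exp (-lam * t) := by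
        apply Real.exp_le_exp.mpr
        have h2 := mul_le_mul_of_nonneg_left (hlamle i hi) ht
        nlinarith
      have h2 : (0:ℝ) ≤ Real.exp (-t * μ i) := (Real.exp_pos _).le
      exact mul_le_mul_of_nonneg_right (pow_le_pow_left₀ h2 h1 2) (sq_nonneg (c i))
  have hnormp0 : ‖p0‖^2 = ∑ i, (c i)^2 := parseval b p0
  have hbound : ∀ t : ℝ, 0 ≤ t →
      ‖NormedSpace.exp ((-t) • A) p0 - P0‖ ≤ Real.exp (-lam * t) * ‖p0‖ := by
    intro t ht
    have hco : ∀ j, (inner ℝ (b j) (NormedSpace.exp ((-t) • A) p0 - P0) : ℝ)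
        = (Real.exp (-t * μ j) * c j) - (if μ j = 0 then c j else 0) := by
      intro j
      rw [hdiff t]
      exact b.orthonormal.inner_right_fintype _ j
    have h1 : ‖NormedSpace.exp ((-t) • A) p0 - P0‖^2
        ≤ (Real.exp (-lam * t) * ‖p0‖)^2 := by
      rw [parseval b, mul_pow, hnormp0, Finset.mul_sum]
      refine Finset.sum_le_sum fun i _ => ?_
      rw [hco i]
      exact hcoefbound t ht i
    calc ‖NormedSpace.exp ((-t) • A) p0 - P0‖
        = Real.sqrt (‖NormedSpace.exp ((-t) • A) p0 - P0‖^2) :=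
          (Real.sqrt_sq (norm_nonneg _)).symm
      _ ≤ Real.sqrt ((Real.exp (-lam * t) * ‖p0‖)^2) := Real.sqrt_le_sqrt h1
      _ = Real.exp (-lam * t) * ‖p0‖ := Real.sqrt_sq (by positivity)
  have hsum_inner : (∑ k : Fin (m+1), (inner ℝ (mv (S k) Lh) (blk p0 k) : ℝ))
      = (inner ℝ (V0 S Lh) p0 : ℝ) := by
    rw [innerCfg]
    exact Finset.sum_congr rfl fun k _ => rfl
  have hFd : ∀ t : ℝ, mvC (NormedSpace.exp ((-t) • Qm)) p0
      = NormedSpace.exp ((-t) • A) p0 := hmvCexp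
  constructor
  · have hlim_eq : ((((m+1 : ℕ) : ℝ))⁻¹
        * ∑ k : Fin (m+1), (inner ℝ (mv (S k) Lh) (blk p0 k) : ℝ)) • V0 S Lh = P0 := by
      rw [hsum_inner, hP0def]
    have htends0 : Tendsto (fun t : ℝ => Real.exp (-lam * t) * ‖p0‖) atTop (𝓝 0) := by
      have h1 : Tendsto (fun t : ℝ => lam * t) atTop atTop :=
        Tendsto.const_mul_atTop hlampos tendsto_id
      have h2 : Tendsto (fun t : ℝ => Real.exp (-(lam * t))) atTop (𝓝 0) :=
        Real.tendsto_exp_neg_atTop_nhds_zero.comp h1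
      have h3 := h2.mul_const ‖p0‖
      rw [zero_mul] at h3
      simpa [neg_mul] using h3
    have hsq : Tendsto (fun t : ℝ => NormedSpace.exp ((-t) • A) p0 - P0) atTop (𝓝 0) := by
      apply squeeze_zero_norm' ?_ htends0
      filter_upwards [Filter.eventually_ge_atTop 0] with t ht
      exact hbound t ht
    have h4 := hsq.add_const P0
    rw [zero_add] at h4
    have h5 : Tendsto (fun t : ℝ => NormedSpace.exp ((-t) • A) p0) atTop (𝓝 P0) := by
      convert h4 using 2 with t
      abel
    simp only [hFd]
    rw [hlim_eq]
    exact h5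
  · refine ⟨lam, hlampos, fun t ht => ?_⟩
    rw [hFd t]
    exact hbound t ht
end
end

section
/- Let n ≥ 2, let τ₁, …, τ_{n−1} be 2×2 real orthogonal matrices, and let Q' be the augmented reflection-based Laplacian on ℝ^{2n} with designated index ℓ, unit normal n̂, and unit mirror direction L̂ (with n̂·L̂ = 0). Then for each agent i ∈ {1,…,n}, the i-th component of the solution p(t) = exp(−tQ')p(0) of ṗ = −Q'p satisfies lim_{t→∞} pᵢ(t) = (1/n)·SᵢL̂·⟨L̂, Σ_{k=1}^{n} S_kᵀ p_k(0)⟩. -/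
open Filter Topology Matrix

noncomputable section

/-- two orthonormal vectors in the plane span it -/
lemma ortho2 (x y w : EuclideanSpace ℝ (Fin 2))
    (hx : x 0 * x 0 + x 1 * x 1 = 1) (hy : y 0 * y 0 + y 1 * y 1 = 1)
    (hxy : x 0 * y 0 + x 1 * y 1 = 0) (hw : x 0 * w 0 + x 1 * w 1 = 0) :
    ∀ a, w a = (y 0 * w 0 + y 1 * w 1) * y a := by
  intro a
  fin_cases a
  · show w 0 = (y 0 * w 0 + y 1 * w 1) * y 0
    linear_combination (-(w 0))*hy + (y 1*(x 0*y 1 - x 1*y 0))*hw +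
      (y 1*(x 1*w 0 - x 0*w 1))*hxy - (y 1*(y 1*w 0 - y 0*w 1))*hx
  · show w 1 = (y 0 * w 0 + y 1 * w 1) * y 1
    linear_combination (-(w 1))*hy - (y 0*(x 0*y 1 - x 1*y 0))*hw -
      (y 0*(x 1*w 0 - x 0*w 1))*hxy + (y 0*(y 1*w 0 - y 0*w 1))*hx

/-- induction along the path graph starting from vertex ℓ -/
lemma pathInd {n : ℕ} (P : Fin n → Prop) (ℓ : Fin n) (h0 : P ℓ)
    (up : ∀ e : Fin (n - 1), P (eL e) → P (eR e))
    (down : ∀ e : Fin (n - 1), P (eR e) → P (eL e)) (i : Fin n) : P i := by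
  have hup : ∀ k : ℕ, ∀ h : (ℓ : ℕ) + k < n, P ⟨(ℓ : ℕ) + k, h⟩ := by
    intro k
    induction k with
    | zero => intro h; exact h0
    | succ k ih =>
      intro h
      have he : (ℓ : ℕ) + k < n - 1 := by omega
      exact up ⟨(ℓ : ℕ) + k, he⟩ (ih (by omega))
  have hdown : ∀ k : ℕ, ∀ h : k ≤ (ℓ : ℕ), P ⟨(ℓ : ℕ) - k, by have := ℓ.isLt; omega⟩ := by
    intro k
    induction k with
    | zero => intro h; exact h0
    | succ k ih =>
      intro h
      have he : (ℓ : ℕ) - (k + 1) < n - 1 := by have := ℓ.isLt; omega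
      have h2 := down ⟨(ℓ : ℕ) - (k + 1), he⟩
      have h3 : eR (⟨(ℓ : ℕ) - (k + 1), he⟩ : Fin (n - 1)) =
          ⟨(ℓ : ℕ) - k, by have := ℓ.isLt; omega⟩ := by
        apply Fin.ext; simp [eR]; omega
      rw [h3] at h2
      exact h2 (ih (by omega))
  rcases le_or_gt (ℓ : ℕ) (i : ℕ) with h | h
  · have := hup ((i : ℕ) - (ℓ : ℕ)) (by have := i.isLt; omega)
    have h4 : (⟨(ℓ : ℕ) + ((i : ℕ) - (ℓ : ℕ)), by have := i.isLt; omega⟩ : Fin n) = i := by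
      apply Fin.ext; simp; omega
    rwa [h4] at this
  · have := hdown ((ℓ : ℕ) - (i : ℕ)) (by omega)
    have h4 : (⟨(ℓ : ℕ) - ((ℓ : ℕ) - (i : ℕ)), by have := ℓ.isLt; omega⟩ : Fin n) = i := by
      apply Fin.ext; simp; omega
    rwa [h4] at this

/-- For the augmented reflection-based Laplacian Q', each component of the
solution p(t) = exp(−tQ')p(0) of ṗ = −Q'p satisfies
lim_{t→∞} pᵢ(t) = (1/n)·SᵢL̂·⟨L̂, Σₖ Sₖᵀ pₖ(0)⟩. -/
theorem stmt1 (n : ℕ) (hn : 2 ≤ n)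
    (τ : Fin (n - 1) → Matrix (Fin 2) (Fin 2) ℝ)
    (hτ : ∀ e, (τ e)ᵀ * τ e = 1)
    (ℓ : Fin n) (nh Lh : EuclideanSpace ℝ (Fin 2))
    (hnh : ‖nh‖ = 1) (hLh : ‖Lh‖ = 1) (hperp : (inner ℝ nh Lh : ℝ) = 0)
    (S : Fin n → Matrix (Fin 2) (Fin 2) ℝ)
    (hSl : S ℓ = 1)
    (hSup : ∀ e : Fin (n - 1), (ℓ : ℕ) ≤ (e : ℕ) → S (eR e) = τ e * S (eL e))
    (hSdown : ∀ e : Fin (n - 1), (e : ℕ) < (ℓ : ℕ) → S (eL e) = (τ e)ᵀ * S (eR e))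
    (Qm : Matrix (Fin n × Fin 2) (Fin n × Fin 2) ℝ)
    (hQm : ∀ (p : Cfg n) (i : Fin n) (a : Fin 2),
      mvC Qm p (i, a) = lapAugAct n τ ℓ nh (blk p) i a)
    (p0 : Cfg n) (i : Fin n) :
    Tendsto (fun t : ℝ => blk (mvC (NormedSpace.exp ((-t) • Qm)) p0) i) atTop
      (𝓝 (((n : ℝ)⁻¹ *
          (inner ℝ Lh (∑ k : Fin n, mv (S k)ᵀ (blk p0 k)) : ℝ)) • mv (S i) Lh)) := by
  obtain ⟨m, rfl⟩ : ∃ m, n = m + 1 := ⟨n - 1, by omega⟩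
  have hm : 1 ≤ m := by omega
  -- basic helpers
  have hinner : ∀ x y : EuclideanSpace ℝ (Fin 2), (inner ℝ x y : ℝ) = x ⬝ᵥ y := fun x y => by
    simp [PiLp.inner_apply, dotProduct]; ring
  have hdsubl : ∀ u v w : EuclideanSpace ℝ (Fin 2), (u - v) ⬝ᵥ w = u ⬝ᵥ w - v ⬝ᵥ w := fun u v w => by
    simp [dotProduct, PiLp.sub_apply, sub_mul, Finset.sum_sub_distrib]
  have hdsubr : ∀ u v w : EuclideanSpace ℝ (Fin 2), u ⬝ᵥ (v - w) = u ⬝ᵥ v - u ⬝ᵥ w := fun u v w => by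
    simp [dotProduct, PiLp.sub_apply, mul_sub, Finset.sum_sub_distrib]
  have hdaddl : ∀ u v w : EuclideanSpace ℝ (Fin 2), (u + v) ⬝ᵥ w = u ⬝ᵥ w + v ⬝ᵥ w := fun u v w => by
    simp [dotProduct, PiLp.add_apply, add_mul, Finset.sum_add_distrib]
  have hdzerol : ∀ w : EuclideanSpace ℝ (Fin 2), (0 : EuclideanSpace ℝ (Fin 2)) ⬝ᵥ w = 0 := fun w => by
    simp [dotProduct]
  have hdsmull : ∀ (c : ℝ) (u w : EuclideanSpace ℝ (Fin 2)), (c • u) ⬝ᵥ w = c * (u ⬝ᵥ w) := fun c u w => by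
    simp [dotProduct, PiLp.smul_apply, smul_eq_mul, Finset.mul_sum, mul_assoc, mul_add]
  have hττ : ∀ e, τ e * (τ e)ᵀ = 1 := fun e => mul_eq_one_comm.mp (hτ e)
  have hmvmv : ∀ (M N : Matrix (Fin 2) (Fin 2) ℝ) v, mv M (mv N v) = mv (M * N) v := fun M N v =>
    congrArg (WithLp.toLp 2) (mulVec_mulVec v.ofLp M N)
  have hmvτ : ∀ e (v : EuclideanSpace ℝ (Fin 2)), mv (τ e)ᵀ (mv (τ e) v) = v := fun e v => by
    rw [hmvmv, hτ]; exact congrArg (WithLp.toLp 2) (one_mulVec v.ofLp)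
  have hdotτ : ∀ e (u v : EuclideanSpace ℝ (Fin 2)), mv (τ e) u ⬝ᵥ mv (τ e) v = u ⬝ᵥ v := by
    intro e u v
    show (τ e *ᵥ u) ⬝ᵥ (τ e *ᵥ v) = u ⬝ᵥ v
    rw [dotProduct_mulVec, ← mulVec_transpose, mulVec_mulVec, hτ, one_mulVec]
  have hmvτ2 : ∀ e (v : EuclideanSpace ℝ (Fin 2)), mv (τ e) (mv (τ e)ᵀ v) = v := fun e v => by
    rw [hmvmv, hττ]; exact congrArg (WithLp.toLp 2) (one_mulVec v.ofLp)
  have hdotτ' : ∀ e (u v : EuclideanSpace ℝ (Fin 2)), mv (τ e)ᵀ u ⬝ᵥ v = u ⬝ᵥ mv (τ e) v := by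
    intro e u v
    conv_rhs => rw [← hmvτ2 e u]
    rw [hdotτ]
  -- uniform edge relation for S
  have hEdge : ∀ e : Fin (m + 1 - 1), S (eR e) = τ e * S (eL e) := by
    intro e
    rcases le_or_gt (ℓ : ℕ) (e : ℕ) with h | h
    · exact hSup e h
    · rw [hSdown e h, ← mul_assoc, hττ, one_mul]
  have hSorth : ∀ j, (S j)ᵀ * S j = 1 := by
    intro j
    refine pathInd (fun j => (S j)ᵀ * S j = 1) ℓ
      (by show (S ℓ)ᵀ * S ℓ = 1; rw [hSl]; simp) ?_ ?_ j
    · intro e hP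
      have hP' : (S (eL e))ᵀ * S (eL e) = 1 := hP
      show (S (eR e))ᵀ * S (eR e) = 1
      rw [hEdge e, transpose_mul, mul_assoc, ← mul_assoc (τ e)ᵀ, hτ, one_mul, hP']
    · intro e hP
      have hP' : (S (eR e))ᵀ * S (eR e) = 1 := hP
      show (S (eL e))ᵀ * S (eL e) = 1
      rw [hEdge e, transpose_mul, mul_assoc, ← mul_assoc (τ e)ᵀ, hτ, one_mul] at hP'
      exact hP'
  have hdotS : ∀ j (u v : EuclideanSpace ℝ (Fin 2)), mv (S j) u ⬝ᵥ mv (S j) v = u ⬝ᵥ v := by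
    intro j u v
    show (S j *ᵥ u) ⬝ᵥ (S j *ᵥ v) = u ⬝ᵥ v
    rw [dotProduct_mulVec, ← mulVec_transpose, mulVec_mulVec, hSorth, one_mulVec]
  -- the bilinear form
  have hB : ∀ p q : Cfg (m + 1), (Qm *ᵥ p) ⬝ᵥ q
      = (∑ e : Fin (m + 1 - 1),
          (blk p (eR e) - mv (τ e) (blk p (eL e))) ⬝ᵥ (blk q (eR e) - mv (τ e) (blk q (eL e))))
        + 2 * (nh ⬝ᵥ blk p ℓ) * (nh ⬝ᵥ blk q ℓ) := by
    intro p q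
    have L1 : (Qm *ᵥ p) ⬝ᵥ q
        = ∑ i' : Fin (m + 1), lapAugAct (m + 1) τ ℓ nh (blk p) i' ⬝ᵥ blk q i' := by
      rw [dotProduct, Fintype.sum_prod_type]
      refine Finset.sum_congr rfl fun i' _ => Finset.sum_congr rfl fun a _ => ?_
      rw [show (Qm *ᵥ p) (i', a) = lapAugAct (m + 1) τ ℓ nh (blk p) i' a from hQm p i' a]
      rfl
    rw [L1]
    have L2 : ∀ i', lapAugAct (m + 1) τ ℓ nh (blk p) i' ⬝ᵥ blk q i'
        = lapAct (m + 1) τ (blk p) i' ⬝ᵥ blk q i'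
          + (if i' = ℓ then 2 * (nh ⬝ᵥ blk p ℓ) * (nh ⬝ᵥ blk q i') else 0) := by
      intro i'
      show (lapAct (m + 1) τ (blk p) i'
          + (if i' = ℓ then (2 * (inner ℝ nh ((blk p) ℓ) : ℝ)) • nh else 0)) ⬝ᵥ blk q i' = _
      rw [hdaddl]
      congr 1
      by_cases h : i' = ℓ
      · rw [if_pos h, if_pos h, hdsmull, hinner]; try ring
      · rw [if_neg h, if_neg h]; exact hdzerol _
    rw [Finset.sum_congr rfl fun i' _ => L2 i', Finset.sum_add_distrib]
    have L3 : ∑ i', (if i' = ℓ then 2 * (nh ⬝ᵥ blk p ℓ) * (nh ⬝ᵥ blk q i') else 0)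
        = 2 * (nh ⬝ᵥ blk p ℓ) * (nh ⬝ᵥ blk q ℓ) := by
      rw [Finset.sum_ite_eq' Finset.univ ℓ (fun i' => 2 * (nh ⬝ᵥ blk p ℓ) * (nh ⬝ᵥ blk q i'))]
      simp
    rw [L3]
    congr 1
    have L4 : ∑ i' : Fin (m + 1), lapAct (m + 1) τ (blk p) i' ⬝ᵥ blk q i'
        = (∑ i' : Fin (m + 1), (dite (0 < (i' : ℕ))
              (fun _ => blk p i' - mv (τ ⟨(i' : ℕ) - 1, by have := i'.isLt; omega⟩)
                (blk p ⟨(i' : ℕ) - 1, by have := i'.isLt; omega⟩))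
              (fun _ => (0 : EuclideanSpace ℝ (Fin 2)))) ⬝ᵥ blk q i')
          + ∑ i' : Fin (m + 1), (dite ((i' : ℕ) + 1 < m + 1)
              (fun h => blk p i' - mv (τ ⟨(i' : ℕ), by omega⟩)ᵀ (blk p ⟨(i' : ℕ) + 1, h⟩))
              (fun _ => (0 : EuclideanSpace ℝ (Fin 2)))) ⬝ᵥ blk q i' := by
      rw [← Finset.sum_add_distrib]
      refine Finset.sum_congr rfl fun i' _ => ?_
      rw [← hdaddl]
      by_cases h1 : 0 < (i' : ℕ) <;> by_cases h2 : (i' : ℕ) + 1 < m + 1 <;> simp [lapAct, h1, h2]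
    rw [L4]
    have LA : ∑ i' : Fin (m + 1), (dite (0 < (i' : ℕ))
              (fun _ => blk p i' - mv (τ ⟨(i' : ℕ) - 1, by have := i'.isLt; omega⟩)
                (blk p ⟨(i' : ℕ) - 1, by have := i'.isLt; omega⟩))
              (fun _ => (0 : EuclideanSpace ℝ (Fin 2)))) ⬝ᵥ blk q i'
        = ∑ e : Fin (m + 1 - 1), (blk p (eR e) - mv (τ e) (blk p (eL e))) ⬝ᵥ blk q (eR e) := by
      rw [Fin.sum_univ_succ]
      have h0 : (dite (0 < ((0 : Fin (m + 1)) : ℕ))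
              (fun _ => (blk p 0 - mv (τ ⟨((0 : Fin (m+1)) : ℕ) - 1, by omega⟩)
                (blk p ⟨((0 : Fin (m+1)) : ℕ) - 1, by omega⟩)).ofLp)
              (fun _ => WithLp.ofLp (0 : EuclideanSpace ℝ (Fin 2)))) = WithLp.ofLp 0 := dif_neg (by simp)
      rw [h0, hdzerol, zero_add]
      refine Finset.sum_congr rfl fun e _ => ?_
      rw [dif_pos (show 0 < ((Fin.succ e : Fin (m + 1)) : ℕ) from by simp)]
      try rfl
    have LB : ∑ i' : Fin (m + 1), (dite ((i' : ℕ) + 1 < m + 1)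
              (fun h => blk p i' - mv (τ ⟨(i' : ℕ), by omega⟩)ᵀ (blk p ⟨(i' : ℕ) + 1, h⟩))
              (fun _ => (0 : EuclideanSpace ℝ (Fin 2)))) ⬝ᵥ blk q i'
        = ∑ e : Fin (m + 1 - 1), (blk p (eL e) - mv (τ e)ᵀ (blk p (eR e))) ⬝ᵥ blk q (eL e) := by
      rw [Fin.sum_univ_castSucc]
      have h0 : (dite (((Fin.last m : Fin (m + 1)) : ℕ) + 1 < m + 1)
              (fun h => (blk p (Fin.last m) - mv (τ ⟨((Fin.last m : Fin (m+1)) : ℕ), by omega⟩)ᵀ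
                (blk p ⟨((Fin.last m : Fin (m+1)) : ℕ) + 1, h⟩)).ofLp)
              (fun _ => WithLp.ofLp (0 : EuclideanSpace ℝ (Fin 2)))) = WithLp.ofLp 0 := dif_neg (by simp)
      rw [h0, hdzerol, add_zero]
      refine Finset.sum_congr rfl fun e _ => ?_
      rw [dif_pos (show ((Fin.castSucc e : Fin (m + 1)) : ℕ) + 1 < m + 1 from by simp)]
      try rfl
    rw [LA, LB, ← Finset.sum_add_distrib]
    refine Finset.sum_congr rfl fun e _ => ?_
    rw [hdsubl, hdsubl, hdsubl, hdsubr, hdsubr, hdotτ' e, hdotτ e]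
    ring
  -- symmetry of Qm
  have hBsymm : ∀ p q : Cfg (m + 1), (Qm *ᵥ p) ⬝ᵥ q = (Qm *ᵥ q) ⬝ᵥ p := by
    intro p q
    rw [hB p q, hB q p]
    have h : (∑ e : Fin (m + 1 - 1),
          (blk p (eR e) - mv (τ e) (blk p (eL e))) ⬝ᵥ (blk q (eR e) - mv (τ e) (blk q (eL e))))
        = ∑ e : Fin (m + 1 - 1),
          (blk q (eR e) - mv (τ e) (blk q (eL e))) ⬝ᵥ (blk p (eR e) - mv (τ e) (blk p (eL e))) :=
      Finset.sum_congr rfl fun e _ => dotProduct_comm _ _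
    rw [h]
    ring
  have hent : ∀ x y, Qm x y
      = (Qm *ᵥ (EuclideanSpace.single y 1 : Cfg (m + 1))) ⬝ᵥ (EuclideanSpace.single x 1) := by
    intro x y
    simp [mulVec, dotProduct, EuclideanSpace.single_apply, mul_ite, ite_mul]
  have hsym : Qmᵀ = Qm := by
    ext x y
    rw [Matrix.transpose_apply, hent y x, hent x y]
    exact hBsymm _ _
  have hHerm : Qm.IsHermitian := hsym
  have hdnn : ∀ v : EuclideanSpace ℝ (Fin 2), 0 ≤ v ⬝ᵥ v := fun v =>
    Finset.sum_nonneg fun a _ => mul_self_nonneg _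
  have hPSD : Qm.PosSemidef := by
    refine Matrix.PosSemidef.of_dotProduct_mulVec_nonneg hHerm fun x => ?_
    have hx : star x = x := by funext z; simp
    rw [hx, show x ⬝ᵥ (Qm *ᵥ x) = (Qm *ᵥ x) ⬝ᵥ x from dotProduct_comm _ _, hB (WithLp.toLp 2 x) (WithLp.toLp 2 x)]
    have h1 : (0:ℝ) ≤ ∑ e : Fin (m + 1 - 1),
        (blk (WithLp.toLp 2 x) (eR e) - mv (τ e) (blk (WithLp.toLp 2 x) (eL e))) ⬝ᵥ (blk (WithLp.toLp 2 x) (eR e) - mv (τ e) (blk (WithLp.toLp 2 x) (eL e))) :=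
      Finset.sum_nonneg fun e _ => hdnn _
    nlinarith [mul_self_nonneg (nh ⬝ᵥ blk (WithLp.toLp 2 x) ℓ)]
  have hdot2 : ∀ u w : EuclideanSpace ℝ (Fin 2), u ⬝ᵥ w = u 0 * w 0 + u 1 * w 1 := fun u w => by
    simp [dotProduct, Fin.sum_univ_two]
  have hnorm1 : ∀ x : EuclideanSpace ℝ (Fin 2), ‖x‖ = 1 → x ⬝ᵥ x = 1 := by
    intro x h
    have h2 := real_inner_self_eq_norm_sq x
    rw [hinner, h] at h2
    simpa using h2
  have hxx : nh ⬝ᵥ nh = 1 := hnorm1 nh hnh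
  have hyy : Lh ⬝ᵥ Lh = 1 := hnorm1 Lh hLh
  have hxy : nh ⬝ᵥ Lh = 0 := by rw [← hinner]; exact hperp
  -- kernel lemma
  have hker : ∀ v : Cfg (m + 1), Qm *ᵥ v = 0 →
      ∀ x, v x = (Lh ⬝ᵥ blk v ℓ) * V0 S Lh x := by
    intro v hv
    have hq0 : (∑ e : Fin (m + 1 - 1),
          (blk v (eR e) - mv (τ e) (blk v (eL e))) ⬝ᵥ (blk v (eR e) - mv (τ e) (blk v (eL e))))
        + 2 * (nh ⬝ᵥ blk v ℓ) * (nh ⬝ᵥ blk v ℓ) = 0 := by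
      rw [← hB v v, hv, zero_dotProduct]
    have hsnn : (0:ℝ) ≤ ∑ e : Fin (m + 1 - 1),
        (blk v (eR e) - mv (τ e) (blk v (eL e))) ⬝ᵥ (blk v (eR e) - mv (τ e) (blk v (eL e))) :=
      Finset.sum_nonneg fun e _ => hdnn _
    have hc0 : nh ⬝ᵥ blk v ℓ = 0 := by nlinarith [mul_self_nonneg (nh ⬝ᵥ blk v ℓ)]
    have hsum0 : (∑ e : Fin (m + 1 - 1),
        (blk v (eR e) - mv (τ e) (blk v (eL e))) ⬝ᵥ (blk v (eR e) - mv (τ e) (blk v (eL e)))) = 0 := by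
      rw [hc0] at hq0; linarith
    have hedge0 : ∀ e, blk v (eR e) = mv (τ e) (blk v (eL e)) := by
      intro e
      have he : (blk v (eR e) - mv (τ e) (blk v (eL e))) ⬝ᵥ (blk v (eR e) - mv (τ e) (blk v (eL e))) = 0 :=
        (Finset.sum_eq_zero_iff_of_nonneg (fun e _ => hdnn _)).mp hsum0 e (Finset.mem_univ e)
      have hz : ∀ a, (blk v (eR e) - mv (τ e) (blk v (eL e))) a = 0 := by
        intro a
        exact mul_self_eq_zero.mp
          ((Finset.sum_eq_zero_iff_of_nonneg (fun a _ => mul_self_nonneg _)).mp he a (Finset.mem_univ a))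
      have hsub : blk v (eR e) - mv (τ e) (blk v (eL e)) = 0 := by
        apply PiLp.ext; intro a; simpa using hz a
      exact sub_eq_zero.mp hsub
    have hblk : ∀ j, blk v j = mv (S j) (blk v ℓ) := by
      intro j
      refine pathInd (fun j => blk v j = mv (S j) (blk v ℓ)) ℓ ?_ ?_ ?_ j
      · show blk v ℓ = mv (S ℓ) (blk v ℓ)
        rw [hSl]; exact (congrArg (WithLp.toLp 2) (one_mulVec (blk v ℓ).ofLp)).symm
      · intro e h
        have h' : blk v (eL e) = mv (S (eL e)) (blk v ℓ) := h
        show blk v (eR e) = mv (S (eR e)) (blk v ℓ)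
        rw [hedge0 e, h', hmvmv, ← hEdge]
      · intro e h
        have h' : blk v (eR e) = mv (S (eR e)) (blk v ℓ) := h
        show blk v (eL e) = mv (S (eL e)) (blk v ℓ)
        have h2 := congrArg (mv (τ e)ᵀ) (hedge0 e)
        rw [hmvτ] at h2
        rw [← h2, h', hmvmv]
        congr 1
        rw [hEdge e, ← mul_assoc, hτ, one_mul]
    have hvl : ∀ a, blk v ℓ a = (Lh ⬝ᵥ blk v ℓ) * Lh a := by
      intro a
      rw [hdot2]
      exact ortho2 nh Lh (blk v ℓ) (by rw [← hdot2]; exact hxx) (by rw [← hdot2]; exact hyy)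
        (by rw [← hdot2]; exact hxy) (by rw [← hdot2]; exact hc0) a
    intro x
    have h1 : v x = blk v x.1 x.2 := rfl
    rw [h1, hblk x.1]
    calc mv (S x.1) (blk v ℓ) x.2 = ∑ b, S x.1 x.2 b * blk v ℓ b := rfl
      _ = ∑ b, S x.1 x.2 b * ((Lh ⬝ᵥ blk v ℓ) * Lh b) :=
          Finset.sum_congr rfl fun b _ => by rw [← hvl b]
      _ = (Lh ⬝ᵥ blk v ℓ) * ∑ b, S x.1 x.2 b * Lh b := by
          rw [Finset.mul_sum]; exact Finset.sum_congr rfl fun b _ => by ring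
      _ = (Lh ⬝ᵥ blk v ℓ) * V0 S Lh x := rfl
  -- V0 is in the kernel
  have hA0 : ∀ (i' : Fin (m + 1)) (h : 0 < (i' : ℕ)),
      blk (V0 S Lh) i' = mv (τ ⟨(i' : ℕ) - 1, by have := i'.isLt; omega⟩)
        (blk (V0 S Lh) ⟨(i' : ℕ) - 1, by have := i'.isLt; omega⟩) := by
    intro i' h
    have heR : eR (⟨(i' : ℕ) - 1, by have := i'.isLt; omega⟩ : Fin (m + 1 - 1)) = i' := by
      apply Fin.ext; simp [eR]; omega
    show mv (S i') Lh = _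
    rw [show blk (V0 S Lh) (⟨(i' : ℕ) - 1, by have := i'.isLt; omega⟩ : Fin (m + 1))
        = mv (S (eL (⟨(i' : ℕ) - 1, by have := i'.isLt; omega⟩ : Fin (m + 1 - 1)))) Lh from rfl]
    rw [hmvmv, ← hEdge, heR]
  have hB0 : ∀ (i' : Fin (m + 1)) (h : (i' : ℕ) + 1 < m + 1),
      blk (V0 S Lh) i' = mv (τ ⟨(i' : ℕ), by omega⟩)ᵀ (blk (V0 S Lh) ⟨(i' : ℕ) + 1, h⟩) := by
    intro i' h
    show mv (S i') Lh = _
    rw [show blk (V0 S Lh) (⟨(i' : ℕ) + 1, h⟩ : Fin (m + 1))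
        = mv (S (eR (⟨(i' : ℕ), by omega⟩ : Fin (m + 1 - 1)))) Lh from rfl]
    rw [hmvmv, hEdge, ← mul_assoc, hτ, one_mul]
    rfl
  have hlap0 : ∀ i', lapAugAct (m + 1) τ ℓ nh (blk (V0 S Lh)) i' = 0 := by
    intro i'
    have hiteq : (if i' = ℓ then (2 * (inner ℝ nh ((blk (V0 S Lh)) ℓ) : ℝ)) • nh else 0)
        = (0 : EuclideanSpace ℝ (Fin 2)) := by
      by_cases h : i' = ℓ
      · rw [if_pos h]
        have hbl : blk (V0 S Lh) ℓ = Lh := by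
          show mv (S ℓ) Lh = Lh
          rw [hSl]; exact congrArg (WithLp.toLp 2) (one_mulVec Lh.ofLp)
        rw [hbl, hperp]
        simp
      · rw [if_neg h]
    show lapAct (m + 1) τ (blk (V0 S Lh)) i' + _ = 0
    rw [hiteq, add_zero]
    simp only [lapAct]
    by_cases h1 : 0 < (i' : ℕ)
    · by_cases h2 : (i' : ℕ) + 1 < m + 1
      · rw [dif_pos h1, dif_pos h2, ← hA0 i' h1, ← hB0 i' h2, sub_self, add_zero]
      · rw [dif_pos h1, dif_neg h2, ← hA0 i' h1, sub_self, add_zero]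
    · by_cases h2 : (i' : ℕ) + 1 < m + 1
      · rw [dif_neg h1, dif_pos h2, ← hB0 i' h2, sub_self, zero_add]
      · exact absurd (by omega : (i' : ℕ) + 1 < m + 1) h2
  have hQW : Qm *ᵥ (V0 S Lh : Fin (m + 1) × Fin 2 → ℝ) = 0 := by
    funext x
    obtain ⟨i', a⟩ := x
    rw [show (Qm *ᵥ (V0 S Lh : Fin (m + 1) × Fin 2 → ℝ)) (i', a)
        = lapAugAct (m + 1) τ ℓ nh (blk (V0 S Lh)) i' a from hQm _ i' a, hlap0 i']
    rfl
  have hWW : (V0 S Lh : Fin (m + 1) × Fin 2 → ℝ) ⬝ᵥ V0 S Lh = ((m + 1 : ℕ) : ℝ) := by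
    rw [dotProduct, Fintype.sum_prod_type]
    have h1 : ∀ k : Fin (m + 1), (∑ b : Fin 2, V0 S Lh (k, b) * V0 S Lh (k, b)) = 1 := by
      intro k
      have h2 : mv (S k) Lh ⬝ᵥ mv (S k) Lh = 1 := by rw [hdotS, hyy]
      exact h2
    rw [Finset.sum_congr rfl fun k _ => h1 k]
    simp
  -- spectral decomposition
  set U : Matrix (Fin (m + 1) × Fin 2) (Fin (m + 1) × Fin 2) ℝ :=
    (hHerm.eigenvectorUnitary : Matrix (Fin (m + 1) × Fin 2) (Fin (m + 1) × Fin 2) ℝ) with hU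
  set μ : Fin (m + 1) × Fin 2 → ℝ := hHerm.eigenvalues with hμ
  have hUUc : U * star U = 1 := by
    rw [hU]; exact Matrix.mem_unitaryGroup_iff.mp hHerm.eigenvectorUnitary.2
  have hUU : star U * U = 1 := by
    rw [hU]; exact Matrix.mem_unitaryGroup_iff'.mp hHerm.eigenvectorUnitary.2
  have hUinv : U⁻¹ = star U := Matrix.inv_eq_left_inv hUU
  have hUunit : IsUnit U := ⟨⟨U, star U, hUUc, hUU⟩, rfl⟩
  have hspec : Qm = U * Matrix.diagonal μ * star U := by
    rw [hU, hμ]; simpa using hHerm.spectral_theorem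
  have heignn : ∀ j, 0 ≤ μ j := by
    intro j; rw [hμ]; exact hPSD.eigenvalues_nonneg j
  have hcol : ∀ j, Qm *ᵥ (fun x => U x j) = μ j • (fun x => U x j) := by
    intro j
    rw [hU, hμ]
    have := hHerm.mulVec_eigenvectorBasis j
    simpa using this
  have hexp : ∀ t : ℝ, NormedSpace.exp ((-t) • Qm)
      = U * Matrix.diagonal (fun j => Real.exp (-t * μ j)) * star U := by
    intro t
    have h1 : (-t) • Qm = U * ((-t) • Matrix.diagonal μ) * U⁻¹ := by
      rw [hUinv, hspec, mul_smul_comm, smul_mul_assoc]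
    rw [h1, Matrix.exp_conj U ((-t) • Matrix.diagonal μ) hUunit, hUinv]
    have h2 : NormedSpace.exp ((-t) • Matrix.diagonal μ)
        = Matrix.diagonal (fun j => Real.exp (-t * μ j)) := by
      rw [← Matrix.diagonal_smul, Matrix.exp_diagonal]
      have h3 : NormedSpace.exp ((-t) • μ) = fun j => Real.exp (-t * μ j) := by
        funext j
        rw [Pi.coe_exp, Real.exp_eq_exp_ℝ]
        rw [show ((-t) • μ) j = -t * μ j from rfl]
      rw [h3]
    rw [h2]
  have hentry : ∀ (dt : Fin (m + 1) × Fin 2 → ℝ) (x : Fin (m + 1) × Fin 2),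
      ((U * Matrix.diagonal dt * star U) *ᵥ (p0 : Fin (m + 1) × Fin 2 → ℝ)) x
      = ∑ j, U x j * dt j * ∑ y, U y j * p0 y := by
    intro dt x
    have h1 : ∀ y, (U * Matrix.diagonal dt * star U) x y = ∑ j, U x j * dt j * U y j := by
      intro y
      rw [Matrix.mul_apply]
      refine Finset.sum_congr rfl fun j _ => ?_
      rw [Matrix.mul_diagonal]
      have : (star U) j y = U y j := by simp [conjTranspose_apply]
      rw [this]
    calc ((U * Matrix.diagonal dt * star U) *ᵥ (p0 : Fin (m + 1) × Fin 2 → ℝ)) x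
        = ∑ y, (U * Matrix.diagonal dt * star U) x y * p0 y := rfl
      _ = ∑ y, (∑ j, U x j * dt j * U y j) * p0 y :=
          Finset.sum_congr rfl fun y _ => by rw [h1]
      _ = ∑ y, ∑ j, U x j * dt j * U y j * p0 y :=
          Finset.sum_congr rfl fun y _ => Finset.sum_mul _ _ _
      _ = ∑ j, ∑ y, U x j * dt j * U y j * p0 y := Finset.sum_comm
      _ = ∑ j, U x j * dt j * ∑ y, U y j * p0 y := by
          refine Finset.sum_congr rfl fun j _ => ?_
          rw [Finset.mul_sum]
          exact Finset.sum_congr rfl fun y _ => by ring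
  have hd : ∀ j, μ j = 0 → ∀ x, U x j = (Lh ⬝ᵥ blk (WithLp.toLp 2 (fun x => U x j)) ℓ) * V0 S Lh x := by
    intro j hj
    refine hker (WithLp.toLp 2 (fun x => U x j)) ?_
    show Qm *ᵥ (fun x => U x j) = 0
    rw [hcol j, hj, zero_smul]
  have hUW : ∀ j, (∑ y, U y j * V0 S Lh y)
      = if μ j = 0 then (Lh ⬝ᵥ blk (WithLp.toLp 2 (fun x => U x j)) ℓ) * ((m + 1 : ℕ) : ℝ) else 0 := by
    intro j
    by_cases hj : μ j = 0
    · rw [if_pos hj]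
      calc ∑ y, U y j * V0 S Lh y
          = ∑ y, ((Lh ⬝ᵥ blk (WithLp.toLp 2 (fun x => U x j)) ℓ) * V0 S Lh y) * V0 S Lh y :=
            Finset.sum_congr rfl fun y _ => by rw [hd j hj y]
        _ = (Lh ⬝ᵥ blk (WithLp.toLp 2 (fun x => U x j)) ℓ) * ((V0 S Lh : Fin (m + 1) × Fin 2 → ℝ) ⬝ᵥ V0 S Lh) := by
            rw [show (V0 S Lh : Fin (m + 1) × Fin 2 → ℝ) ⬝ᵥ V0 S Lh
              = ∑ y, V0 S Lh y * V0 S Lh y from rfl, Finset.mul_sum]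
            exact Finset.sum_congr rfl fun y _ => by ring
        _ = _ := by rw [hWW]
    · rw [if_neg hj]
      have h1 : (Qm *ᵥ (fun x => U x j)) ⬝ᵥ (V0 S Lh : Fin (m + 1) × Fin 2 → ℝ)
          = μ j * ∑ y, U y j * V0 S Lh y := by
        rw [hcol j, smul_dotProduct, smul_eq_mul, dotProduct]
      have h2 : (Qm *ᵥ (fun x => U x j)) ⬝ᵥ (V0 S Lh : Fin (m + 1) × Fin 2 → ℝ) = 0 := by
        rw [dotProduct_comm, dotProduct_mulVec, ← Matrix.mulVec_transpose, hsym, hQW,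
          zero_dotProduct]
      rw [h1] at h2
      rcases mul_eq_zero.mp h2 with h | h
      · exact absurd h hj
      · exact h
  have hWne : ∃ x0, V0 S Lh x0 ≠ 0 := by
    by_contra hco
    push_neg at hco
    have h1 : (V0 S Lh : Fin (m + 1) × Fin 2 → ℝ) ⬝ᵥ V0 S Lh = 0 := by
      rw [dotProduct]
      exact Finset.sum_eq_zero fun y _ => by rw [hco y]; ring
    rw [hWW] at h1
    exact absurd h1 (Nat.cast_ne_zero.mpr (by omega))
  obtain ⟨x0, hx0⟩ := hWne
  have hWrep : ∀ x, V0 S Lh x = ∑ j, U x j * ∑ y, U y j * V0 S Lh y := by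
    intro x
    calc V0 S Lh x = ((U * star U) *ᵥ (V0 S Lh : Fin (m + 1) × Fin 2 → ℝ)) x := by
          rw [hUUc, one_mulVec]
      _ = ∑ j, U x j * ((star U *ᵥ (V0 S Lh : Fin (m + 1) × Fin 2 → ℝ)) j) := by
          rw [← mulVec_mulVec]; rfl
      _ = ∑ j, U x j * ∑ y, U y j * V0 S Lh y := by
          refine Finset.sum_congr rfl fun j _ => ?_
          congr 1
  have hsumd : ((m + 1 : ℕ) : ℝ) * (∑ j, if μ j = 0 then
      (Lh ⬝ᵥ blk (WithLp.toLp 2 (fun x => U x j)) ℓ) * (Lh ⬝ᵥ blk (WithLp.toLp 2 (fun x => U x j)) ℓ) else 0) = 1 := by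
    have h2 : V0 S Lh x0 = (∑ j, if μ j = 0 then
        (Lh ⬝ᵥ blk (WithLp.toLp 2 (fun x => U x j)) ℓ) * (Lh ⬝ᵥ blk (WithLp.toLp 2 (fun x => U x j)) ℓ) else 0)
          * ((m + 1 : ℕ) : ℝ) * V0 S Lh x0 := by
      calc V0 S Lh x0 = ∑ j, U x0 j * ∑ y, U y j * V0 S Lh y := hWrep x0
        _ = ∑ j, (if μ j = 0 then ((Lh ⬝ᵥ blk (WithLp.toLp 2 (fun x => U x j)) ℓ) * V0 S Lh x0)
              * ((Lh ⬝ᵥ blk (WithLp.toLp 2 (fun x => U x j)) ℓ) * ((m + 1 : ℕ) : ℝ)) else 0) := by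
            refine Finset.sum_congr rfl fun j _ => ?_
            rw [hUW j]
            by_cases hj : μ j = 0
            · rw [if_pos hj, if_pos hj, hd j hj x0]
            · rw [if_neg hj, if_neg hj, mul_zero]
        _ = (∑ j, if μ j = 0 then
              (Lh ⬝ᵥ blk (WithLp.toLp 2 (fun x => U x j)) ℓ) * (Lh ⬝ᵥ blk (WithLp.toLp 2 (fun x => U x j)) ℓ) else 0)
                * ((m + 1 : ℕ) : ℝ) * V0 S Lh x0 := by
            rw [Finset.sum_mul, Finset.sum_mul]
            refine Finset.sum_congr rfl fun j _ => ?_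
            by_cases hj : μ j = 0
            · rw [if_pos hj, if_pos hj]; ring
            · rw [if_neg hj, if_neg hj]; ring
    have h3 : (∑ j, if μ j = 0 then
        (Lh ⬝ᵥ blk (WithLp.toLp 2 (fun x => U x j)) ℓ) * (Lh ⬝ᵥ blk (WithLp.toLp 2 (fun x => U x j)) ℓ) else 0)
          * ((m + 1 : ℕ) : ℝ) = 1 := by
      apply mul_right_cancel₀ hx0
      rw [one_mul]
      exact h2.symm
    rw [mul_comm]
    exact h3
  have hlim : ∀ x : Fin (m + 1) × Fin 2,
      (∑ j, if μ j = 0 then U x j * ∑ y, U y j * p0 y else 0)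
      = ((m + 1 : ℕ) : ℝ)⁻¹ * (∑ y, V0 S Lh y * p0 y) * V0 S Lh x := by
    intro x
    have h4 : (∑ j, if μ j = 0 then
        (Lh ⬝ᵥ blk (WithLp.toLp 2 (fun x => U x j)) ℓ) * (Lh ⬝ᵥ blk (WithLp.toLp 2 (fun x => U x j)) ℓ) else 0)
          = ((m + 1 : ℕ) : ℝ)⁻¹ := (inv_eq_of_mul_eq_one_right hsumd).symm
    calc ∑ j, (if μ j = 0 then U x j * ∑ y, U y j * p0 y else 0)
        = ∑ j, (if μ j = 0 then
            (Lh ⬝ᵥ blk (WithLp.toLp 2 (fun x => U x j)) ℓ) * (Lh ⬝ᵥ blk (WithLp.toLp 2 (fun x => U x j)) ℓ) else 0)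
              * (V0 S Lh x * ∑ y, V0 S Lh y * p0 y) := by
          refine Finset.sum_congr rfl fun j _ => ?_
          by_cases hj : μ j = 0
          · have hcj : (∑ y, U y j * p0 y)
                = (Lh ⬝ᵥ blk (WithLp.toLp 2 (fun x => U x j)) ℓ) * ∑ y, V0 S Lh y * p0 y := by
              rw [Finset.mul_sum]
              exact Finset.sum_congr rfl fun y _ => by rw [hd j hj y]; ring
            rw [if_pos hj, if_pos hj, hd j hj x, hcj]
            ring
          · rw [if_neg hj, if_neg hj, zero_mul]
      _ = (∑ j, if μ j = 0 then
            (Lh ⬝ᵥ blk (WithLp.toLp 2 (fun x => U x j)) ℓ) * (Lh ⬝ᵥ blk (WithLp.toLp 2 (fun x => U x j)) ℓ) else 0)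
              * (V0 S Lh x * ∑ y, V0 S Lh y * p0 y) := (Finset.sum_mul _ _ _).symm
      _ = ((m + 1 : ℕ) : ℝ)⁻¹ * (∑ y, V0 S Lh y * p0 y) * V0 S Lh x := by
          rw [h4]; ring
  have hip : (inner ℝ Lh (∑ k : Fin (m + 1), mv (S k)ᵀ (blk p0 k)) : ℝ)
      = ∑ y, V0 S Lh y * p0 y := by
    rw [hinner, dotProduct]
    have hZa : ∀ a : Fin 2, (∑ k : Fin (m + 1), mv (S k)ᵀ (blk p0 k)) a
        = ∑ k : Fin (m + 1), mv (S k)ᵀ (blk p0 k) a :=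
      fun a => by rw [WithLp.ofLp_sum, Finset.sum_apply]
    calc ∑ a, Lh a * (∑ k : Fin (m + 1), mv (S k)ᵀ (blk p0 k)) a
        = ∑ a, ∑ k, ∑ b, Lh a * (S k b a * p0 (k, b)) := by
          refine Finset.sum_congr rfl fun a _ => ?_
          rw [hZa a, Finset.mul_sum]
          refine Finset.sum_congr rfl fun k _ => ?_
          rw [show mv (S k)ᵀ (blk p0 k) a = ∑ b, S k b a * p0 (k, b) from rfl, Finset.mul_sum]
      _ = ∑ k, ∑ b, ∑ a, Lh a * (S k b a * p0 (k, b)) := by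
          rw [Finset.sum_comm]
          exact Finset.sum_congr rfl fun k _ => Finset.sum_comm
      _ = ∑ k, ∑ b, (∑ a, S k b a * Lh a) * p0 (k, b) := by
          refine Finset.sum_congr rfl fun k _ => Finset.sum_congr rfl fun b _ => ?_
          rw [Finset.sum_mul]
          exact Finset.sum_congr rfl fun a _ => by ring
      _ = ∑ y, V0 S Lh y * p0 y := by
          rw [Fintype.sum_prod_type]
          rfl
  have hcomp : ∀ a : Fin 2,
      Tendsto (fun t : ℝ => blk (mvC (NormedSpace.exp ((-t) • Qm)) p0) i a) atTop
        (𝓝 (((((m + 1 : ℕ) : ℝ))⁻¹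
            * (inner ℝ Lh (∑ k : Fin (m + 1), mv (S k)ᵀ (blk p0 k)) : ℝ)) * V0 S Lh (i, a))) := by
    intro a
    have heq : ∀ t : ℝ, blk (mvC (NormedSpace.exp ((-t) • Qm)) p0) i a
        = ∑ j, U (i, a) j * Real.exp (-t * μ j) * ∑ y, U y j * p0 y := by
      intro t
      rw [show blk (mvC (NormedSpace.exp ((-t) • Qm)) p0) i a
          = ((NormedSpace.exp ((-t) • Qm)) *ᵥ (p0 : Fin (m + 1) × Fin 2 → ℝ)) (i, a) from rfl,
        hexp t, hentry]
    simp only [heq]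
    have hlim2 : ((((m + 1 : ℕ) : ℝ))⁻¹
        * (inner ℝ Lh (∑ k : Fin (m + 1), mv (S k)ᵀ (blk p0 k)) : ℝ)) * V0 S Lh (i, a)
        = ∑ j, if μ j = 0 then U (i, a) j * ∑ y, U y j * p0 y else 0 := by
      rw [hip, hlim (i, a)]
      try ring
    rw [hlim2]
    apply tendsto_finset_sum
    intro j _
    by_cases hj : μ j = 0
    · rw [if_pos hj]
      simpa [hj] using (tendsto_const_nhds :
        Tendsto (fun _ : ℝ => U (i, a) j * 1 * ∑ y, U y j * p0 y) atTop (𝓝 _))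
    · rw [if_neg hj]
      have hpos : 0 < μ j := lt_of_le_of_ne (heignn j) (Ne.symm hj)
      have h1 : Tendsto (fun t : ℝ => t * μ j) atTop atTop :=
        Tendsto.atTop_mul_const hpos tendsto_id
      have h2 := ((Real.tendsto_exp_atBot.comp
        (tendsto_neg_atTop_atBot.comp h1)).const_mul (U (i, a) j)).mul_const
          (∑ y, U y j * p0 y)
      simpa [Function.comp, neg_mul] using h2
  have hfin : ∀ a : Fin 2,
      (((((m + 1 : ℕ)) : ℝ)⁻¹
          * (inner ℝ Lh (∑ k : Fin (m + 1), mv (S k)ᵀ (blk p0 k)) : ℝ)) • mv (S i) Lh) a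
      = ((((m + 1 : ℕ) : ℝ))⁻¹
          * (inner ℝ Lh (∑ k : Fin (m + 1), mv (S k)ᵀ (blk p0 k)) : ℝ)) * V0 S Lh (i, a) := by
    intro a
    rw [PiLp.smul_apply, smul_eq_mul]
    rfl
  have hcomp2 : ∀ a : Fin 2,
      Tendsto (fun t : ℝ => blk (mvC (NormedSpace.exp ((-t) • Qm)) p0) i a) atTop
        (𝓝 ((((((m + 1 : ℕ)) : ℝ)⁻¹
            * (inner ℝ Lh (∑ k : Fin (m + 1), mv (S k)ᵀ (blk p0 k)) : ℝ)) • mv (S i) Lh) a)) := by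
    intro a
    rw [hfin a]
    exact hcomp a
  exact ((PiLp.continuousLinearEquiv 2 ℝ (fun _ : Fin 2 => ℝ)).symm.continuous.tendsto
    _).comp (tendsto_pi_nhds.mpr hcomp2)
end
end

section
/- Let n ≥ 2 and θ₀ ∈ ℝ. For i = 1,…,n−1 set n̂ᵢ = (cos(θ₀ + (2i−1)π/n), sin(θ₀ + (2i−1)π/n)) and τᵢ = H(n̂ᵢ) = I₂ − 2n̂ᵢn̂ᵢᵀ. Let L̂ = (−sin θ₀, cos θ₀), and define p₁ = L̂ and p_{i+1} = τᵢ pᵢ for i = 1,…,n−1. Then p_{i+1} = R(2π/n)·pᵢ for every i = 1,…,n−1; that is, the configuration obtained by propagating the anchored mirror direction through the inter-agent reflections automatically satisfies the rotational symmetry relations of the dihedral group C_{nv}. -/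
open Filter Topology Matrix

noncomputable section

/-- The 2×2 rotation matrix R(θ) = [[cos θ, −sin θ],[sin θ, cos θ]]. -/
def Rot (θ : ℝ) : Matrix (Fin 2) (Fin 2) ℝ :=
  !![Real.cos θ, -Real.sin θ; Real.sin θ, Real.cos θ]

/-- The Householder reflection H(u) = I₂ − 2uuᵀ across the line with unit normal u. -/
def House (u : EuclideanSpace ℝ (Fin 2)) : Matrix (Fin 2) (Fin 2) ℝ :=
  1 - (2 : ℝ) • Matrix.vecMulVec u u

/-- The unit vector (cos θ, sin θ). -/
def unitVec (θ : ℝ) : EuclideanSpace ℝ (Fin 2) := WithLp.toLp 2 ![Real.cos θ, Real.sin θ]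

lemma house_act (a f : ℝ) :
    (mv (House (unitVec a)) (WithLp.toLp 2 ![-Real.sin f, Real.cos f])).ofLp
      = ![-Real.sin (2*a - f), Real.cos (2*a - f)] := by
  funext i
  fin_cases i
  · simp [mv, House, unitVec, Matrix.mulVec, Matrix.vecMulVec, dotProduct,
      Matrix.one_apply, Fin.sum_univ_two, Real.sin_sub, Real.cos_sub,
      Real.sin_two_mul, Real.cos_two_mul]
    ring
  · simp [mv, House, unitVec, Matrix.mulVec, Matrix.vecMulVec, dotProduct,
      Matrix.one_apply, Fin.sum_univ_two, Real.sin_sub, Real.cos_sub,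
      Real.sin_two_mul, Real.cos_two_mul]
    linear_combination (-2*Real.cos f) * Real.sin_sq_add_cos_sq a

lemma rot_act (t f : ℝ) :
    (mv (Rot t) (WithLp.toLp 2 ![-Real.sin f, Real.cos f])).ofLp
      = ![-Real.sin (f + t), Real.cos (f + t)] := by
  funext i
  fin_cases i <;>
    simp [mv, Rot, Matrix.mulVec, dotProduct, Fin.sum_univ_two,
      Real.sin_add, Real.cos_add] <;> ring

/-- With mirror normals n̂ᵢ = (cos(θ₀+(2i−1)π/n), sin(θ₀+(2i−1)π/n)),
reflections τᵢ = H(n̂ᵢ), anchored direction L̂ = (−sin θ₀, cos θ₀), p₁ = L̂ and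
p_{i+1} = τᵢ pᵢ, the propagated configuration satisfies the rotational relations
p_{i+1} = R(2π/n) pᵢ for every i = 1, …, n−1. -/
theorem stmt2 (n : ℕ) (hn : 2 ≤ n) (θ0 : ℝ)
    (p : Fin n → EuclideanSpace ℝ (Fin 2))
    (hp1 : p ⟨0, by omega⟩ = ![-Real.sin θ0, Real.cos θ0])
    (hrec : ∀ e : Fin (n - 1),
      p (eR e) = mv (House (unitVec (θ0 + (2 * (e : ℕ) + 1 : ℝ) * Real.pi / n))) (p (eL e))) :
    ∀ e : Fin (n - 1), p (eR e) = mv (Rot (2 * Real.pi / n)) (p (eL e)) := by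
  have key : ∀ i : ℕ, ∀ hi : i < n,
      p ⟨i, hi⟩ = ![-Real.sin (θ0 + 2 * Real.pi * i / n), Real.cos (θ0 + 2 * Real.pi * i / n)] := by
    intro i
    induction i with
    | zero =>
      intro hi
      simpa using hp1
    | succ k ih =>
      intro hi
      have hk : k < n - 1 := by omega
      have he := hrec ⟨k, hk⟩
      have hL : eL (⟨k, hk⟩ : Fin (n-1)) = ⟨k, by omega⟩ := rfl
      have hR : eR (⟨k, hk⟩ : Fin (n-1)) = ⟨k+1, hi⟩ := rfl
      have ih' := congrArg (WithLp.toLp 2) (ih (by omega))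
      simp only [WithLp.toLp_ofLp] at ih'
      rw [hR, hL, ih'] at he
      rw [he, house_act]
      congr 2 <;> · push_cast; ring
  intro e
  have h1 := key (e : ℕ) (by have := e.isLt; omega)
  have h2 := key ((e : ℕ) + 1) (by have := e.isLt; omega)
  have hL : eL e = ⟨(e:ℕ), by have := e.isLt; omega⟩ := rfl
  have hR : eR e = ⟨(e:ℕ)+1, by have := e.isLt; omega⟩ := rfl
  have h1' := congrArg (WithLp.toLp 2) h1
  simp only [WithLp.toLp_ofLp] at h1'
  rw [hR, hL]
  apply WithLp.ofLp_injective
  rw [h2, h1', rot_act]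
  congr 2 <;> · push_cast; ring
end
end
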